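/- arXiv:1112.3639 — 5 statements merged into one kernel-verified Lean document; each statement's English description precedes it below -/
import Mathlib

section
/- The run transform is multiplicative in the following sense: for formal power series f and g over a commutative ring, Φ(x·f(x)·g(x)) = x·Φ(f)·Φ(g), where Φ(f) denotes the two-variable power series ((1-x)/(1-xy))·f(x(1-x)/(1-xy)). -/
open PowerSeries MvPowerSeries Finset

/-- Substitution of a bivariate power series with zero constant term (and positive
order in every monomial) into a univariate formal power series, defined
coefficient-wise. -/
noncomputable def substPS {R : Type*} [CommRing R]
    (a : MvPowerSeries (Fin 2) R) (f : PowerSeries R) : MvPowerSeries (Fin 2) R :=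
  fun d => ∑ n ∈ Finset.range (d 0 + d 1 + 1),
    (PowerSeries.coeff n f) * MvPowerSeries.coeff d (a ^ n)

/-- The run transform `Φ(f)(x,y) = ((1-x)/(1-xy)) · f(x(1-x)/(1-xy))`. -/
noncomputable def runTransform {R : Type*} [CommRing R] (f : PowerSeries R) :
    MvPowerSeries (Fin 2) R :=
  (1 - MvPowerSeries.X 0) * MvPowerSeries.invOfUnit (1 - MvPowerSeries.X 0 * MvPowerSeries.X 1) 1 *
    substPS ((MvPowerSeries.X 0 * (1 - MvPowerSeries.X 0)) *
      MvPowerSeries.invOfUnit (1 - MvPowerSeries.X 0 * MvPowerSeries.X 1) 1) f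

section Aux

variable {R : Type*} [CommRing R]

lemma coeff_pow_zero {a : MvPowerSeries (Fin 2) R}
    (ha : MvPowerSeries.constantCoeff a = 0) :
    ∀ (n : ℕ) (d : Fin 2 →₀ ℕ), d 0 + d 1 < n → MvPowerSeries.coeff d (a ^ n) = 0 := by
  intro n
  induction n with
  | zero => intro d h; omega
  | succ n ih =>
    intro d h
    rw [pow_succ', MvPowerSeries.coeff_mul]
    apply Finset.sum_eq_zero
    rintro ⟨e, f⟩ hef
    rw [Finset.HasAntidiagonal.mem_antidiagonal] at hef
    by_cases he : e = 0
    · subst he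
      simp only [MvPowerSeries.coeff_zero_eq_constantCoeff, ha, zero_mul]
    · have h1 : e 0 + e 1 ≥ 1 := by
        by_contra hc
        push_neg at hc
        apply he
        have h2 : e 0 = 0 ∧ e 1 = 0 := by omega
        ext i
        fin_cases i
        · simpa using h2.1
        · simpa using h2.2
      have h0 : d 0 = e 0 + f 0 := by rw [← hef]; simp
      have h1' : d 1 = e 1 + f 1 := by rw [← hef]; simp
      rw [ih f (by omega), mul_zero]

lemma substPS_apply (a : MvPowerSeries (Fin 2) R) (f : PowerSeries R) (d : Fin 2 →₀ ℕ) :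
    MvPowerSeries.coeff d (substPS a f) = ∑ n ∈ Finset.range (d 0 + d 1 + 1),
      (PowerSeries.coeff n f) * MvPowerSeries.coeff d (a ^ n) := rfl

lemma substPS_eq_big {a : MvPowerSeries (Fin 2) R}
    (ha : MvPowerSeries.constantCoeff a = 0) (f : PowerSeries R)
    (d : Fin 2 →₀ ℕ) {N : ℕ} (hN : d 0 + d 1 < N) :
    MvPowerSeries.coeff d (substPS a f) = ∑ n ∈ Finset.range N,
      (PowerSeries.coeff n f) * MvPowerSeries.coeff d (a ^ n) := by
  rw [substPS_apply]
  apply Finset.sum_subset (Finset.range_subset_range.2 (by omega))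
  intro n hn hn2
  rw [Finset.mem_range, not_lt] at hn2
  rw [coeff_pow_zero ha n d (by omega), mul_zero]

lemma coeff_eval₂ (a : MvPowerSeries (Fin 2) R) (P : Polynomial R) {N : ℕ}
    (hP : P.natDegree < N) (d : Fin 2 →₀ ℕ) :
    MvPowerSeries.coeff d (Polynomial.eval₂ ((MvPowerSeries.C (σ := Fin 2) (R := R))) a P) =
      ∑ n ∈ Finset.range N, P.coeff n * MvPowerSeries.coeff d (a ^ n) := by
  rw [Polynomial.eval₂_eq_sum_range' _ hP, map_sum]
  exact Finset.sum_congr rfl fun n _ => MvPowerSeries.coeff_C_mul _ _ _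

lemma substPS_eq_trunc {a : MvPowerSeries (Fin 2) R}
    (ha : MvPowerSeries.constantCoeff a = 0) (f : PowerSeries R)
    (d : Fin 2 →₀ ℕ) {N : ℕ} (hN : d 0 + d 1 < N) :
    MvPowerSeries.coeff d (substPS a f) =
      MvPowerSeries.coeff d
        (Polynomial.eval₂ ((MvPowerSeries.C (σ := Fin 2) (R := R))) a (PowerSeries.trunc N f)) := by
  obtain ⟨M, rfl⟩ : ∃ M, N = M + 1 := ⟨N - 1, by omega⟩
  rw [substPS_eq_big ha f d hN, coeff_eval₂ a _ (PowerSeries.natDegree_trunc_lt f M) d]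
  refine Finset.sum_congr rfl fun n hn => ?_
  rw [Finset.mem_range] at hn
  rw [PowerSeries.coeff_trunc, if_pos hn]

lemma substPS_mul {a : MvPowerSeries (Fin 2) R}
    (ha : MvPowerSeries.constantCoeff a = 0) (f g : PowerSeries R) :
    substPS a (f * g) = substPS a f * substPS a g := by
  ext d
  set N := d 0 + d 1 + 1 with hNdef
  have hN : d 0 + d 1 < N := by omega
  set Pf := PowerSeries.trunc N f
  set Pg := PowerSeries.trunc N g
  have hdeg : (Pf * Pg).natDegree < 2 * N := by
    calc (Pf * Pg).natDegree ≤ Pf.natDegree + Pg.natDegree := Polynomial.natDegree_mul_le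
    _ < 2 * N := by
        have h1 : Pf.natDegree < N := PowerSeries.natDegree_trunc_lt f (d 0 + d 1)
        have h2 : Pg.natDegree < N := PowerSeries.natDegree_trunc_lt g (d 0 + d 1)
        omega
  have lhs : MvPowerSeries.coeff d (substPS a (f * g)) =
      MvPowerSeries.coeff d
        (Polynomial.eval₂ ((MvPowerSeries.C (σ := Fin 2) (R := R))) a (Pf * Pg)) := by
    rw [substPS_eq_big ha _ d hN, coeff_eval₂ a _ hdeg d]
    rw [← Finset.sum_subset (Finset.range_subset_range.2 (by omega : N ≤ 2 * N))
      (fun n _ hn2 => by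
        rw [Finset.mem_range, not_lt] at hn2
        rw [coeff_pow_zero ha n d (by omega), mul_zero])]
    refine Finset.sum_congr rfl fun n hn => ?_
    rw [Finset.mem_range] at hn
    congr 1
    rw [PowerSeries.coeff_mul, Polynomial.coeff_mul]
    refine Finset.sum_congr rfl fun p hp => ?_
    rw [Finset.HasAntidiagonal.mem_antidiagonal] at hp
    have hp1 : p.1 < N := by omega
    have hp2 : p.2 < N := by omega
    simp only [Pf, Pg, PowerSeries.coeff_trunc, if_pos hp1, if_pos hp2]
  rw [lhs, MvPowerSeries.coeff_mul, Polynomial.eval₂_mul, MvPowerSeries.coeff_mul]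
  refine Finset.sum_congr rfl fun p hp => ?_
  rw [Finset.HasAntidiagonal.mem_antidiagonal] at hp
  have h0 : d 0 = p.1 0 + p.2 0 := by rw [← hp]; simp
  have h1 : d 1 = p.1 1 + p.2 1 := by rw [← hp]; simp
  rw [substPS_eq_trunc ha f p.1 (by omega : p.1 0 + p.1 1 < N),
    substPS_eq_trunc ha g p.2 (by omega : p.2 0 + p.2 1 < N)]

lemma substPS_X {a : MvPowerSeries (Fin 2) R}
    (ha : MvPowerSeries.constantCoeff a = 0) :
    substPS a PowerSeries.X = a := by
  ext d
  rw [substPS_apply]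
  by_cases hd : d 0 + d 1 = 0
  · have hd0 : d = 0 := by
      ext i
      have h2 : d 0 = 0 ∧ d 1 = 0 := by omega
      fin_cases i
      · simpa using h2.1
      · simpa using h2.2
    subst hd0
    simp [hd, PowerSeries.coeff_X, ha]
  · have : ∀ n ∈ Finset.range (d 0 + d 1 + 1),
        (PowerSeries.coeff n PowerSeries.X) * MvPowerSeries.coeff d (a ^ n) =
        if n = 1 then MvPowerSeries.coeff d a else 0 := by
      intro n _
      rw [PowerSeries.coeff_X]
      split <;> simp_all
    rw [Finset.sum_congr rfl this, Finset.sum_ite_eq' (Finset.range (d 0 + d 1 + 1)) 1,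
      if_pos (by rw [Finset.mem_range]; omega)]

end Aux

/-- `Φ(x·f·g) = x·Φ(f)·Φ(g)`. -/
theorem runTransform_mul {R : Type*} [CommRing R] (f g : PowerSeries R) :
    runTransform (PowerSeries.X * f * g) =
      MvPowerSeries.X 0 * runTransform f * runTransform g := by
  have ha : MvPowerSeries.constantCoeff (σ := Fin 2) (R := R)
      ((MvPowerSeries.X 0 * (1 - MvPowerSeries.X 0)) *
        MvPowerSeries.invOfUnit (1 - MvPowerSeries.X 0 * MvPowerSeries.X 1) 1) = 0 := by
    simp [map_mul]
  unfold runTransform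
  rw [substPS_mul ha, substPS_mul ha, substPS_X ha]
  ring
end

section
/- All coefficients of the bivariate power series C(x,y) = Φ(C(x)) are nonnegative integers. Specifically, writing C(x,y) = Σ_{n,k} u_{n,k} x^n y^k, each u_{n,k} ≥ 0. -/
open PowerSeries MvPowerSeries Finset

/-- The Catalan generating function `C(x) = Σ C_n x^n` (over `ℤ`). -/
noncomputable def catalanGF : PowerSeries ℤ := PowerSeries.mk fun n => (catalan n : ℤ)

namespace RTProof

lemma fin2_ext {d e : Fin 2 →₀ ℕ} (h0 : d 0 = e 0) (h1 : d 1 = e 1) : d = e := by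
  ext i
  fin_cases i
  · exact h0
  · exact h1

lemma fin2_eq_iff {d e : Fin 2 →₀ ℕ} : d = e ↔ d 0 = e 0 ∧ d 1 = e 1 :=
  ⟨fun h => by rw [h]; exact ⟨rfl, rfl⟩, fun ⟨h0, h1⟩ => fin2_ext h0 h1⟩

lemma fin2_le_iff {d e : Fin 2 →₀ ℕ} : d ≤ e ↔ d 0 ≤ e 0 ∧ d 1 ≤ e 1 := by
  constructor
  · intro h; exact ⟨Finsupp.le_def.mp h 0, Finsupp.le_def.mp h 1⟩
  · rintro ⟨h0, h1⟩
    apply Finsupp.le_def.mpr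
    intro i
    fin_cases i
    · exact h0
    · exact h1

lemma fin2_repr (d : Fin 2 →₀ ℕ) : d = Finsupp.single 0 (d 0) + Finsupp.single 1 (d 1) := by
  apply fin2_ext <;> simp

noncomputable def J : MvPowerSeries (Fin 2) ℤ := 1 - MvPowerSeries.X 0 * MvPowerSeries.X 1
noncomputable def Jinv : MvPowerSeries (Fin 2) ℤ := MvPowerSeries.invOfUnit J 1
noncomputable def g : MvPowerSeries (Fin 2) ℤ := (1 - MvPowerSeries.X 0) * Jinv
noncomputable def A : MvPowerSeries (Fin 2) ℤ :=
  (MvPowerSeries.X 0 * (1 - MvPowerSeries.X 0)) * Jinv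
noncomputable def S : MvPowerSeries (Fin 2) ℤ := substPS A catalanGF

lemma F_def : runTransform catalanGF = g * S := rfl

lemma J_mul_Jinv : J * Jinv = 1 := by
  apply MvPowerSeries.mul_invOfUnit
  simp [J]

noncomputable def Gc : MvPowerSeries (Fin 2) ℤ :=
  fun d => if d 0 = d 1 then 1 else if d 0 = d 1 + 1 then -1 else 0

lemma coeff_Gc (d : Fin 2 →₀ ℕ) :
    MvPowerSeries.coeff d Gc = if d 0 = d 1 then 1 else if d 0 = d 1 + 1 then -1 else 0 := rfl

lemma X01_eq : (MvPowerSeries.X 0 * MvPowerSeries.X 1 : MvPowerSeries (Fin 2) ℤ)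
    = MvPowerSeries.monomial (Finsupp.single 0 1 + Finsupp.single 1 1) 1 := by
  rw [MvPowerSeries.X_def, MvPowerSeries.X_def, MvPowerSeries.monomial_mul_monomial, one_mul]

lemma J_mul_Gc : J * Gc = 1 - MvPowerSeries.X 0 := by
  ext d
  rw [J, sub_mul, one_mul, map_sub, map_sub, X01_eq, MvPowerSeries.coeff_monomial_mul,
    MvPowerSeries.coeff_one, MvPowerSeries.coeff_X, coeff_Gc]
  have hle : (Finsupp.single 0 1 + Finsupp.single 1 1 ≤ d) ↔ 1 ≤ d 0 ∧ 1 ≤ d 1 := by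
    rw [fin2_le_iff]; simp
  have he1 : (d = 0) ↔ d 0 = 0 ∧ d 1 = 0 := by
    rw [fin2_eq_iff]; simp
  have he2 : (d = Finsupp.single 0 1) ↔ d 0 = 1 ∧ d 1 = 0 := by
    rw [fin2_eq_iff]; simp
  have hs0 : ((d - (Finsupp.single 0 1 + Finsupp.single 1 1) : Fin 2 →₀ ℕ)) 0 = d 0 - 1 := by
    rw [Finsupp.tsub_apply]; simp
  have hs1 : ((d - (Finsupp.single 0 1 + Finsupp.single 1 1) : Fin 2 →₀ ℕ)) 1 = d 1 - 1 := by
    rw [Finsupp.tsub_apply]; simp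
  rw [coeff_Gc, hs0, hs1]
  simp only [hle, he1, he2]
  split_ifs <;> omega

lemma g_eq : g = Gc := by
  rw [g, ← J_mul_Gc, mul_comm J Gc, mul_assoc, J_mul_Jinv, mul_one]

lemma coeff_g (d : Fin 2 →₀ ℕ) :
    MvPowerSeries.coeff d g = if d 0 = d 1 then 1 else if d 0 = d 1 + 1 then -1 else 0 := by
  rw [g_eq, coeff_Gc]



lemma A_eq : A = MvPowerSeries.X 0 * g := by rw [A, g, mul_assoc]

lemma coeff_A_pow {d : Fin 2 →₀ ℕ} {n : ℕ} (h : d 0 < n) :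
    MvPowerSeries.coeff d (A ^ n) = 0 := by
  rw [A_eq, mul_pow, MvPowerSeries.X_pow_eq, MvPowerSeries.coeff_monomial_mul, if_neg]
  rw [Finsupp.single_le_iff]
  omega

lemma sum_stable (d : Fin 2 →₀ ℕ) {N : ℕ} (hN : d 0 < N) :
    ∑ n ∈ Finset.range N, (catalan n : ℤ) * MvPowerSeries.coeff d (A ^ n)
      = ∑ n ∈ Finset.range (d 0 + 1), (catalan n : ℤ) * MvPowerSeries.coeff d (A ^ n) := by
  symm
  apply Finset.sum_subset
  · exact Finset.range_subset_range.mpr (by omega)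
  · intro x _ hx
    rw [Finset.mem_range, not_lt] at hx
    rw [coeff_A_pow (by omega), mul_zero]

lemma coeff_S (d : Fin 2 →₀ ℕ) {N : ℕ} (hN : d 0 < N) :
    MvPowerSeries.coeff d S
      = ∑ n ∈ Finset.range N, (catalan n : ℤ) * MvPowerSeries.coeff d (A ^ n) := by
  have h1 : MvPowerSeries.coeff d S
      = ∑ n ∈ Finset.range (d 0 + d 1 + 1),
          (catalan n : ℤ) * MvPowerSeries.coeff d (A ^ n) := by
    simp [S, substPS, MvPowerSeries.coeff_apply, catalanGF]
  rw [h1, sum_stable d (by omega), sum_stable d hN]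

noncomputable def P (N : ℕ) : MvPowerSeries (Fin 2) ℤ :=
  ∑ n ∈ Finset.range N, MvPowerSeries.C (σ := Fin 2) (R := ℤ) (catalan n) * A ^ n

lemma coeff_P (d : Fin 2 →₀ ℕ) (N : ℕ) :
    MvPowerSeries.coeff d (P N)
      = ∑ n ∈ Finset.range N, (catalan n : ℤ) * MvPowerSeries.coeff d (A ^ n) := by
  rw [P, map_sum]
  exact Finset.sum_congr rfl fun n _ => MvPowerSeries.coeff_C_mul _ _ _

lemma coeff_S_eq_P (d : Fin 2 →₀ ℕ) {N : ℕ} (h : d 0 < N) :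
    MvPowerSeries.coeff d S = MvPowerSeries.coeff d (P N) := by
  rw [coeff_S d h, coeff_P]

lemma coeff_mul_SS (d : Fin 2 →₀ ℕ) :
    MvPowerSeries.coeff d (A * (S * S))
      = MvPowerSeries.coeff d (A * (P (d 0 + 1) * P (d 0 + 1))) := by
  rw [MvPowerSeries.coeff_mul, MvPowerSeries.coeff_mul]
  apply Finset.sum_congr rfl
  intro p hp
  have hp2 : p.2 0 ≤ d 0 := by
    have h := Finset.HasAntidiagonal.mem_antidiagonal.mp hp
    have : p.1 0 + p.2 0 = d 0 := by rw [← Finsupp.add_apply, h]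
    omega
  congr 1
  rw [MvPowerSeries.coeff_mul, MvPowerSeries.coeff_mul]
  apply Finset.sum_congr rfl
  intro q hq
  have hq' : q.1 0 + q.2 0 = p.2 0 := by
    rw [← Finsupp.add_apply, Finset.HasAntidiagonal.mem_antidiagonal.mp hq]
  rw [coeff_S_eq_P q.1 (by omega : q.1 0 < d 0 + 1),
    coeff_S_eq_P q.2 (by omega : q.2 0 < d 0 + 1)]

lemma A_mul_PP (N : ℕ) :
    A * (P N * P N) = ∑ n ∈ Finset.range N, ∑ m ∈ Finset.range N,
      MvPowerSeries.C (σ := Fin 2) (R := ℤ) (catalan n * catalan m) * A ^ (n + m + 1) := by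
  rw [P, Finset.sum_mul_sum, Finset.mul_sum]
  apply Finset.sum_congr rfl; intro n _
  rw [Finset.mul_sum]
  apply Finset.sum_congr rfl; intro m _
  rw [map_mul]
  ring

lemma reindex (c h : ℕ → ℤ) (N : ℕ) (hv : ∀ j, N ≤ j → h j = 0) :
    ∑ n ∈ Finset.range N, ∑ m ∈ Finset.range N, c n * c m * h (n + m)
      = ∑ j ∈ Finset.range N, (∑ p ∈ Finset.HasAntidiagonal.antidiagonal j, c p.1 * c p.2) * h j := by
  rw [← Finset.sum_product']
  have h1 : ∑ p ∈ Finset.range N ×ˢ Finset.range N, c p.1 * c p.2 * h (p.1 + p.2)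
      = ∑ p ∈ (Finset.range N ×ˢ Finset.range N).filter (fun p => p.1 + p.2 < N),
          c p.1 * c p.2 * h (p.1 + p.2) := by
    symm
    apply Finset.sum_filter_of_ne
    intro p _ hne
    by_contra hc
    push_neg at hc
    exact hne (by rw [hv _ hc, mul_zero])
  rw [h1, ← Finset.sum_fiberwise_of_maps_to
    (g := fun p : ℕ × ℕ => p.1 + p.2) (t := Finset.range N)
    (fun p hp => by
      rw [Finset.mem_filter] at hp
      exact Finset.mem_range.mpr hp.2)]
  apply Finset.sum_congr rfl
  intro j hj
  rw [Finset.mem_range] at hj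
  have hset : ((Finset.range N ×ˢ Finset.range N).filter (fun p => p.1 + p.2 < N)).filter
      (fun p => p.1 + p.2 = j) = Finset.HasAntidiagonal.antidiagonal j := by
    ext p
    simp only [Finset.mem_filter, Finset.mem_product, Finset.mem_range,
      Finset.HasAntidiagonal.mem_antidiagonal]
    omega
  rw [hset, Finset.sum_mul]
  apply Finset.sum_congr rfl
  intro p hp
  rw [Finset.HasAntidiagonal.mem_antidiagonal.mp hp]

lemma S_eq : S = 1 + A * (S * S) := by
  ext d
  set N := d 0 + 1 with hN
  have hv : ∀ j, N ≤ j → MvPowerSeries.coeff d (A ^ (j + 1)) = 0 := fun j hj =>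
    coeff_A_pow (by omega)
  have hrhs : MvPowerSeries.coeff d (A * (S * S))
      = ∑ j ∈ Finset.range N, (catalan (j + 1) : ℤ) * MvPowerSeries.coeff d (A ^ (j + 1)) := by
    rw [coeff_mul_SS, A_mul_PP, map_sum]
    have : ∀ n ∈ Finset.range N, MvPowerSeries.coeff d
        (∑ m ∈ Finset.range N, MvPowerSeries.C (σ := Fin 2) (R := ℤ) (catalan n * catalan m) * A ^ (n + m + 1))
        = ∑ m ∈ Finset.range N, (catalan n : ℤ) * (catalan m : ℤ)
            * MvPowerSeries.coeff d (A ^ (n + m + 1)) := by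
      intro n _
      rw [map_sum]
      apply Finset.sum_congr rfl
      intro m _
      simp only [MvPowerSeries.coeff_C_mul, Nat.cast_mul, mul_assoc]
    rw [Finset.sum_congr rfl this,
      reindex (fun n => (catalan n : ℤ)) (fun j => MvPowerSeries.coeff d (A ^ (j + 1))) N hv]
    apply Finset.sum_congr rfl
    intro j _
    congr 1
    rw [catalan_succ']
    push_cast
    rfl
  have hS : MvPowerSeries.coeff d S
      = ∑ j ∈ Finset.range (N + 1), (catalan j : ℤ) * MvPowerSeries.coeff d (A ^ j) :=
    coeff_S d (by omega)
  rw [map_add, hrhs, hS, Finset.sum_range_succ']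
  simp only [pow_zero, catalan_zero, Nat.cast_one, one_mul]
  ring

lemma F_eq : runTransform catalanGF
    = g + MvPowerSeries.X 0 * (runTransform catalanGF * runTransform catalanGF) := by
  have h1 : runTransform catalanGF = g * S := rfl
  calc runTransform catalanGF = g * S := h1
    _ = g * (1 + A * (S * S)) := by rw [← S_eq]
    _ = g * (1 + (MvPowerSeries.X 0 * g) * (S * S)) := by rw [← A_eq]
    _ = g + MvPowerSeries.X 0 * ((g * S) * (g * S)) := by ring
    _ = g + MvPowerSeries.X 0 * (runTransform catalanGF * runTransform catalanGF) := by rw [← h1]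

noncomputable def u (n k : ℕ) : ℤ :=
  MvPowerSeries.coeff (Finsupp.single 0 n + Finsupp.single 1 k) (runTransform catalanGF)

lemma coeff_F_eq_u (p : Fin 2 →₀ ℕ) :
    MvPowerSeries.coeff p (runTransform catalanGF) = u (p 0) (p 1) := by
  rw [u, ← fin2_repr]

lemma d_apply0 (n k : ℕ) : (Finsupp.single 0 n + Finsupp.single 1 k : Fin 2 →₀ ℕ) 0 = n := by simp
lemma d_apply1 (n k : ℕ) : (Finsupp.single 0 n + Finsupp.single 1 k : Fin 2 →₀ ℕ) 1 = k := by simp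

lemma u_rec0 (k : ℕ) : u 0 k = if 0 = k then 1 else 0 := by
  have hnle : ¬ (Finsupp.single 0 1 ≤ (Finsupp.single 0 0 + Finsupp.single 1 k : Fin 2 →₀ ℕ)) := by
    rw [Finsupp.single_le_iff, d_apply0]
    omega
  rw [u]
  conv_lhs => rw [F_eq]
  rw [map_add, coeff_g, MvPowerSeries.X_def, MvPowerSeries.coeff_monomial_mul, if_neg hnle,
    d_apply0, d_apply1, add_zero]
  split_ifs <;> simp_all

lemma u_rec (n k : ℕ) (hn : 1 ≤ n) :
    u n k = (if n = k then 1 else if n = k + 1 then -1 else 0)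
      + ∑ p ∈ Finset.HasAntidiagonal.antidiagonal (Finsupp.single 0 (n - 1) + Finsupp.single 1 k : Fin 2 →₀ ℕ),
          u (p.1 0) (p.1 1) * u (p.2 0) (p.2 1) := by
  have hle : Finsupp.single 0 1 ≤ (Finsupp.single 0 n + Finsupp.single 1 k : Fin 2 →₀ ℕ) := by
    rw [Finsupp.single_le_iff, d_apply0]
    omega
  rw [u]
  conv_lhs => rw [F_eq]
  rw [map_add, coeff_g, d_apply0, d_apply1, MvPowerSeries.X_def,
    MvPowerSeries.coeff_monomial_mul, if_pos hle]
  congr 1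
  rw [one_mul]
  have hd : (Finsupp.single 0 n + Finsupp.single 1 k - Finsupp.single 0 1 : Fin 2 →₀ ℕ)
      = Finsupp.single 0 (n - 1) + Finsupp.single 1 k := by
    apply fin2_ext
    · rw [Finsupp.tsub_apply, d_apply0, d_apply0]; simp
    · rw [Finsupp.tsub_apply, d_apply1, d_apply1]; simp
  rw [hd, MvPowerSeries.coeff_mul]
  apply Finset.sum_congr rfl
  intro p _
  rw [coeff_F_eq_u, coeff_F_eq_u]

lemma mem_antidiag_parts {n k : ℕ} {p : (Fin 2 →₀ ℕ) × (Fin 2 →₀ ℕ)}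
    (hp : p ∈ Finset.HasAntidiagonal.antidiagonal (Finsupp.single 0 (n - 1) + Finsupp.single 1 k : Fin 2 →₀ ℕ)) :
    p.1 0 + p.2 0 = n - 1 ∧ p.1 1 + p.2 1 = k := by
  have h := Finset.HasAntidiagonal.mem_antidiagonal.mp hp
  constructor
  · have : (p.1 + p.2) 0 = n - 1 := by rw [h, d_apply0]
    simpa using this
  · have : (p.1 + p.2) 1 = k := by rw [h, d_apply1]
    simpa using this

set_option maxHeartbeats 1000000 in
theorem u_main : ∀ n : ℕ, (∀ k, 0 ≤ u n k) ∧ u n n = 1 ∧ (∀ k, n < k → u n k = 0) := by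
  intro n
  induction n using Nat.strong_induction_on with
  | _ n IH =>
    rcases Nat.eq_zero_or_pos n with rfl | hn
    · refine ⟨fun k => ?_, ?_, fun k hk => ?_⟩
      · rw [u_rec0]; split_ifs <;> omega
      · rw [u_rec0]; simp
      · rw [u_rec0]; split_ifs <;> omega
    · have hterm : ∀ k, ∀ p ∈ Finset.HasAntidiagonal.antidiagonal
          (Finsupp.single 0 (n - 1) + Finsupp.single 1 k : Fin 2 →₀ ℕ),
          0 ≤ u (p.1 0) (p.1 1) * u (p.2 0) (p.2 1) := by
        intro k p hp
        obtain ⟨h0, _⟩ := mem_antidiag_parts hp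
        exact mul_nonneg ((IH (p.1 0) (by omega)).1 _) ((IH (p.2 0) (by omega)).1 _)
      refine ⟨fun k => ?_, ?_, fun k hk => ?_⟩
      · -- nonnegativity
        rw [u_rec n k hn]
        rcases eq_or_ne n (k + 1) with rfl | hne
        · -- the hard case : constant term -1, but the sum contains (0, d') with value 1
          have hmem : ((0 : Fin 2 →₀ ℕ), (Finsupp.single 0 k + Finsupp.single 1 k : Fin 2 →₀ ℕ))
              ∈ Finset.HasAntidiagonal.antidiagonal
                (Finsupp.single 0 (k + 1 - 1) + Finsupp.single 1 k : Fin 2 →₀ ℕ) := by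
            rw [Finset.HasAntidiagonal.mem_antidiagonal]
            simp
          have hval : u ((0 : Fin 2 →₀ ℕ) 0) ((0 : Fin 2 →₀ ℕ) 1)
              * u ((Finsupp.single 0 k + Finsupp.single 1 k : Fin 2 →₀ ℕ) 0)
                  ((Finsupp.single 0 k + Finsupp.single 1 k : Fin 2 →₀ ℕ) 1) = 1 := by
            rw [d_apply0, d_apply1]
            have h00 : u 0 0 = 1 := (IH 0 (by omega)).2.1
            have hkk : u k k = 1 := (IH k (by omega)).2.1
            simp [h00, hkk]
          have hge : (1 : ℤ) ≤ ∑ p ∈ Finset.HasAntidiagonal.antidiagonal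
              (Finsupp.single 0 (k + 1 - 1) + Finsupp.single 1 k : Fin 2 →₀ ℕ),
              u (p.1 0) (p.1 1) * u (p.2 0) (p.2 1) := by
            have h := Finset.single_le_sum (hterm k) hmem
            rw [hval] at h
            exact h
          have : (if k + 1 = k then (1 : ℤ) else if k + 1 = k + 1 then -1 else 0) = -1 := by
            split_ifs <;> omega
          rw [this]
          omega
        · have hge : (0 : ℤ) ≤ ∑ p ∈ Finset.HasAntidiagonal.antidiagonal
              (Finsupp.single 0 (n - 1) + Finsupp.single 1 k : Fin 2 →₀ ℕ),
              u (p.1 0) (p.1 1) * u (p.2 0) (p.2 1) := Finset.sum_nonneg (hterm k)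
          have : (0 : ℤ) ≤ if n = k then (1 : ℤ) else if n = k + 1 then -1 else 0 := by
            split_ifs <;> omega
          omega
      · -- diagonal = 1
        rw [u_rec n n hn]
        have hzero : ∑ p ∈ Finset.HasAntidiagonal.antidiagonal
            (Finsupp.single 0 (n - 1) + Finsupp.single 1 n : Fin 2 →₀ ℕ),
            u (p.1 0) (p.1 1) * u (p.2 0) (p.2 1) = 0 := by
          apply Finset.sum_eq_zero
          intro p hp
          obtain ⟨h0, h1⟩ := mem_antidiag_parts hp
          rcases lt_or_ge (p.1 0) (p.1 1) with hlt | hle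
          · rw [(IH (p.1 0) (by omega)).2.2 _ hlt, zero_mul]
          · have hlt2 : p.2 0 < p.2 1 := by omega
            rw [(IH (p.2 0) (by omega)).2.2 _ hlt2, mul_zero]
        rw [hzero, if_pos rfl]
        omega
      · -- above diagonal = 0
        rw [u_rec n k hn]
        have hzero : ∑ p ∈ Finset.HasAntidiagonal.antidiagonal
            (Finsupp.single 0 (n - 1) + Finsupp.single 1 k : Fin 2 →₀ ℕ),
            u (p.1 0) (p.1 1) * u (p.2 0) (p.2 1) = 0 := by
          apply Finset.sum_eq_zero
          intro p hp
          obtain ⟨h0, h1⟩ := mem_antidiag_parts hp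
          rcases lt_or_ge (p.1 0) (p.1 1) with hlt | hle
          · rw [(IH (p.1 0) (by omega)).2.2 _ hlt, zero_mul]
          · have hlt2 : p.2 0 < p.2 1 := by omega
            rw [(IH (p.2 0) (by omega)).2.2 _ hlt2, mul_zero]
        rw [hzero]
        split_ifs <;> omega

end RTProof

/-- all coefficients `u_{n,k}` of `C(x,y) = Φ(C(x))` are nonnegative. -/
theorem runTransform_catalan_nonneg (n k : ℕ) :
    0 ≤ MvPowerSeries.coeff (Finsupp.single 0 n + Finsupp.single 1 k)
      (runTransform catalanGF) :=
  (RTProof.u_main n).1 k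
end

section
/- The two infinite lower-unitriangular-type matrices C = (binom(2j−i, j−i) − binom(2j−i, j−i−1))_{i,j≥0} and D = ((−1)^{j−i}·binom(i+1, j−i))_{i,j≥0} are mutually inverse: Σ_k C_{i,k} D_{k,j} = δ_{i,j} for all i, j ≥ 0 (the sum is finite since both matrices are upper triangular). -/
/-- Binomial coefficient `binom(n,k)` for an integer `k`, with the convention that it
vanishes for `k < 0`. -/
def binomZ (n : ℕ) (k : ℤ) : ℤ := if 0 ≤ k then (n.choose k.toNat : ℤ) else 0

/-- The Catalan convolution matrix `C_{i,j} = binom(2j−i, j−i) − binom(2j−i, j−i−1)`. -/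
def catalanMat (i j : ℕ) : ℤ :=
  binomZ (2 * j - i) ((j : ℤ) - i) - binomZ (2 * j - i) ((j : ℤ) - i - 1)

/-- The claimed inverse matrix `D_{i,j} = (−1)^{j−i}·binom(i+1, j−i)`. -/
def catalanMatInv (i j : ℕ) : ℤ := (-1) ^ (j - i) * binomZ (i + 1) ((j : ℤ) - i)

open PowerSeries Finset

/-- Ballot numbers. -/
def bc (a m : ℕ) : ℤ :=
  ((a + 2*m).choose m : ℤ) - if m = 0 then 0 else ((a + 2*m).choose (m-1) : ℤ)

lemma catalanMat_add (a m : ℕ) : catalanMat a (a + m) = bc a m := by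
  unfold catalanMat bc binomZ
  have h1 : 2 * (a + m) - a = a + 2 * m := by omega
  have h2 : ((a + m : ℕ) : ℤ) - a = (m : ℤ) := by push_cast; ring
  rw [h1, h2]
  rcases Nat.eq_zero_or_pos m with hm | hm
  · subst hm; norm_num
  · rw [if_pos (by positivity), if_pos (by omega), if_neg (by omega)]
    have t1 : ((m : ℤ)).toNat = m := Int.toNat_natCast m
    have t2 : ((m : ℤ) - 1).toNat = m - 1 := by omega
    rw [t1, t2]

noncomputable def Cs : PowerSeries ℤ := PowerSeries.mk fun m => (catalan m : ℤ)

noncomputable def Bs (a : ℕ) : PowerSeries ℤ := PowerSeries.mk (bc a)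

lemma hCs : Cs = 1 + X * Cs ^ 2 := by
  ext n
  cases n with
  | zero => simp [Cs, catalan_zero]
  | succ n =>
    rw [map_add, PowerSeries.coeff_succ_X_mul, PowerSeries.coeff_one, if_neg n.succ_ne_zero,
      zero_add, Cs, pow_two, PowerSeries.coeff_mul, PowerSeries.coeff_mk, catalan_succ']
    push_cast
    simp [PowerSeries.coeff_mk]

lemma bc_zero_eq_catalan (m : ℕ) : bc 0 m = (catalan m : ℤ) := by
  rcases Nat.eq_zero_or_pos m with hm | hm
  · subst hm; simp [bc]
  · have key : ((m+1) : ℤ) * bc 0 m = ((m+1) : ℤ) * (catalan m : ℤ) := by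
      have hc : (2*m).choose (m-1) * (m + 1) = (2*m).choose m * m := by
        have := Nat.choose_succ_right_eq (2*m) (m-1)
        have hm1 : m - 1 + 1 = m := by omega
        rw [hm1] at this
        have h2 : 2*m - (m-1) = m + 1 := by omega
        rw [h2] at this
        omega
      have hcb : (m + 1) * catalan m = (2*m).choose m := by
        have := succ_mul_catalan_eq_centralBinom m
        rwa [Nat.centralBinom] at this
      unfold bc
      rw [if_neg (by omega)]
      have h0 : 0 + 2*m = 2*m := by omega
      rw [h0]
      zify at hc hcb
      linear_combination (-1 : ℤ) * hc - hcb
    have := mul_left_cancel₀ (a := ((m+1) : ℤ)) (by positivity) key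
    exact this

lemma hBs0 : Bs 0 = Cs := by
  ext n; simp [Bs, Cs, PowerSeries.coeff_mk, bc_zero_eq_catalan]

-- c 1 n = c 0 (n+1)
lemma bc_one (n : ℕ) : bc 1 n = bc 0 (n + 1) := by
  unfold bc
  rcases Nat.eq_zero_or_pos n with hn | hn
  · subst hn; norm_num
  · rw [if_neg (by omega), if_neg (by omega)]
    have h1 : 1 + 2*n = 2*n + 1 := by omega
    have h2 : 0 + 2*(n+1) = 2*n + 2 := by omega
    rw [h1, h2]
    have e1 : (2*n + 2).choose (n+1) = (2*n+1).choose n + (2*n+1).choose (n+1) :=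
      Nat.choose_succ_succ (2*n+1) n
    have e2 : (2*n + 2).choose n = (2*n+1).choose (n-1) + (2*n+1).choose n := by
      have := Nat.choose_succ_succ (2*n+1) (n-1)
      simp only [Nat.succ_eq_add_one] at this
      rw [show n - 1 + 1 = n by omega] at this
      exact this
    have e3 : (2*n+1).choose (n+1) = (2*n+1).choose n := by
      rw [← Nat.choose_symm (by omega)]
      congr 1
      omega
    have hsucc : n + 1 - 1 = n := by omega
    rw [hsucc, e1, e2, e3]
    push_cast
    ring

-- Pascal-type recurrence: Bs (a+1) = Bs a + X * Bs (a+2)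
lemma hBrec (a : ℕ) : Bs (a + 1) = Bs a + X * Bs (a + 2) := by
  ext n
  cases n with
  | zero =>
    simp [Bs, PowerSeries.coeff_mk, bc]
  | succ m =>
    rw [map_add, PowerSeries.coeff_succ_X_mul, Bs, Bs, Bs,
      PowerSeries.coeff_mk, PowerSeries.coeff_mk, PowerSeries.coeff_mk]
    show bc (a+1) (m+1) = bc a (m+1) + bc (a+2) m
    rcases Nat.eq_zero_or_pos m with hm | hm
    · subst hm
      norm_num [bc]
      omega
    · obtain ⟨k, rfl⟩ : ∃ k, m = k + 1 := ⟨m - 1, by omega⟩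
      norm_num [bc]
      have P1 : (a+2*k+5).choose (k+2) = (a+2*k+4).choose (k+1) + (a+2*k+4).choose (k+2) := by
        have := Nat.choose_succ_succ (a+2*k+4) (k+1)
        simpa [show a+2*k+5 = a+2*k+4+1 by omega] using this
      have P2 : (a+2*k+5).choose (k+1) = (a+2*k+4).choose k + (a+2*k+4).choose (k+1) := by
        have := Nat.choose_succ_succ (a+2*k+4) k
        simpa [show a+2*k+5 = a+2*k+4+1 by omega] using this
      rw [show a+1+2*(k+1+1) = a+2*k+5 by omega, show a+2*(k+1+1) = a+2*k+4 by omega,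
        show a+2+2*(k+1) = a+2*k+4 by omega]
      zify at P1 P2
      rw [P1, P2]
      ring

lemma hXBs1 : X * Bs 1 = Bs 0 - 1 := by
  ext n
  cases n with
  | zero => simp [Bs, PowerSeries.coeff_mk, bc]
  | succ m =>
    rw [PowerSeries.coeff_succ_X_mul, map_sub, PowerSeries.coeff_one,
      if_neg (Nat.succ_ne_zero m), sub_zero, Bs, Bs, PowerSeries.coeff_mk,
      PowerSeries.coeff_mk]
    exact bc_one m

lemma hBs1 : Bs 1 = Cs ^ 2 := by
  have h1 : X * Bs 1 = X * Cs ^ 2 := by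
    rw [hXBs1, hBs0]
    nth_rewrite 1 [hCs]
    ring
  exact mul_left_cancel₀ PowerSeries.X_ne_zero h1

lemma hBC : ∀ a : ℕ, Bs a = Cs ^ (a + 1) := by
  have key : ∀ a : ℕ, Bs a = Cs ^ (a + 1) ∧ Bs (a + 1) = Cs ^ (a + 2) := by
    intro a
    induction a with
    | zero => exact ⟨by rw [hBs0, pow_one], by rw [hBs1]⟩
    | succ n ih =>
      refine ⟨ih.2, ?_⟩
      have h1 : X * Bs (n + 2) = X * Cs ^ (n + 3) := by
        have h2 := hBrec n
        have : X * Bs (n + 2) = Bs (n + 1) - Bs n := by rw [h2]; ring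
        rw [this, ih.1, ih.2]
        have h3 : X * Cs ^ 2 = Cs - 1 := by nth_rewrite 2 [hCs]; ring
        calc Cs ^ (n + 2) - Cs ^ (n + 1) = Cs ^ (n + 1) * (Cs - 1) := by ring
          _ = Cs ^ (n + 1) * (X * Cs ^ 2) := by rw [h3]
          _ = X * Cs ^ (n + 3) := by ring
      exact mul_left_cancel₀ PowerSeries.X_ne_zero h1
  exact fun a => (key a).1

noncomputable def qp : Polynomial ℤ := Polynomial.X * (1 - Polynomial.X)

noncomputable def piN (N : ℕ) :
    Polynomial ℤ →+* Polynomial ℤ ⧸ Ideal.span {(Polynomial.X : Polynomial ℤ) ^ (N + 1)} :=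
  Ideal.Quotient.mk _

lemma piN_X_pow (N : ℕ) : piN N (Polynomial.X ^ (N + 1)) = 0 := by
  rw [piN, Ideal.Quotient.eq_zero_iff_mem]
  exact Ideal.subset_span rfl

lemma piN_qp_pow (N : ℕ) : (piN N qp) ^ (N + 1) = 0 := by
  rw [← map_pow, qp, mul_pow, map_mul, piN_X_pow, zero_mul]

noncomputable def psiN (N : ℕ) (f : PowerSeries ℤ) :
    Polynomial ℤ ⧸ Ideal.span {(Polynomial.X : Polynomial ℤ) ^ (N + 1)} :=
  piN N ((PowerSeries.trunc (N + 1) f).comp qp)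

lemma psiN_one (N : ℕ) : psiN N 1 = 1 := by
  rw [psiN, PowerSeries.trunc_one, Polynomial.one_comp, map_one]

lemma psiN_add (N : ℕ) (f g : PowerSeries ℤ) : psiN N (f + g) = psiN N f + psiN N g := by
  rw [psiN, psiN, psiN, map_add, Polynomial.add_comp, map_add]

lemma psiN_mul (N : ℕ) (f g : PowerSeries ℤ) : psiN N (f * g) = psiN N f * psiN N g := by
  have hdvd : (Polynomial.X : Polynomial ℤ) ^ (N + 1) ∣
      (PowerSeries.trunc (N + 1) f * PowerSeries.trunc (N + 1) g
        - PowerSeries.trunc (N + 1) (f * g)) := by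
    rw [Polynomial.X_pow_dvd_iff]
    intro d hd
    rw [Polynomial.coeff_sub, PowerSeries.coeff_trunc, if_pos hd, sub_eq_zero,
      Polynomial.coeff_mul, PowerSeries.coeff_mul]
    refine Finset.sum_congr rfl fun p hp => ?_
    have hpd := Finset.HasAntidiagonal.mem_antidiagonal.mp hp
    rw [PowerSeries.coeff_trunc, PowerSeries.coeff_trunc, if_pos (by omega), if_pos (by omega)]
  obtain ⟨h, hh⟩ := hdvd
  have key : PowerSeries.trunc (N + 1) f * PowerSeries.trunc (N + 1) g
      = PowerSeries.trunc (N + 1) (f * g) + Polynomial.X ^ (N + 1) * h := by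
    rw [← hh]; ring
  have : psiN N f * psiN N g
      = piN N ((PowerSeries.trunc (N + 1) f * PowerSeries.trunc (N + 1) g).comp qp) := by
    rw [psiN, psiN, Polynomial.mul_comp, map_mul]
  rw [this, key, Polynomial.add_comp, Polynomial.mul_comp, Polynomial.X_pow_comp,
    map_add, map_mul (piN N), map_pow (piN N), piN_qp_pow, zero_mul, add_zero, psiN]

lemma psiN_pow (N : ℕ) (f : PowerSeries ℤ) (k : ℕ) : psiN N (f ^ k) = (psiN N f) ^ k := by
  induction k with
  | zero => simpa using psiN_one N
  | succ n ih =>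
    have : f ^ (n + 1) = f ^ n * f := pow_succ f n
    rw [this, psiN_mul, ih]
    exact (pow_succ _ n).symm

lemma psiN_X (N : ℕ) : psiN N X = piN N qp := by
  cases N with
  | zero =>
    have ht : PowerSeries.trunc 1 (X : PowerSeries ℤ) = 0 := by
      apply Polynomial.ext
      intro d
      rw [PowerSeries.coeff_trunc]
      rcases Nat.eq_zero_or_pos d with hd | hd
      · subst hd; simp
      · rw [if_neg (by omega)]; simp
    have hx0 : piN 0 (Polynomial.X : Polynomial ℤ) = 0 := by
      simpa using piN_X_pow 0
    rw [psiN, ht, Polynomial.zero_comp, map_zero, qp, map_mul, hx0, zero_mul]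
  | succ n =>
    rw [psiN, PowerSeries.trunc_X, Polynomial.X_comp]

lemma main_quot (N a : ℕ) :
    (1 - piN N Polynomial.X) ^ (a + 1) * psiN N (Bs a) = 1 := by
  set x := piN N Polynomial.X with hxdef
  set s := psiN N Cs with hsdef
  have hq : piN N qp = x * (1 - x) := by
    rw [qp, map_mul, map_sub, map_one]
  have hs : s = 1 + x * (1 - x) * s ^ 2 := by
    rw [hsdef]
    nth_rewrite 1 [hCs]
    rw [psiN_add, psiN_one, psiN_mul, psiN_X, hq, psiN_pow]
  set u := (1 - x) * s with hudef
  have hrel : u = (1 - x) + x * u ^ 2 := by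
    rw [hudef]
    linear_combination (1 - x) * hs
  have hkey : (u - 1) * (1 - x * (u + 1)) = 0 := by linear_combination hrel
  have hnil : IsNilpotent (x * (u + 1)) := by
    refine ⟨N + 1, ?_⟩
    rw [mul_pow, hxdef, ← map_pow, piN_X_pow, zero_mul]
  obtain ⟨v, hv⟩ := hnil.isUnit_one_sub.exists_right_inv
  have hu : u = 1 := by
    have h0 : u - 1 = 0 := by
      calc u - 1 = (u - 1) * ((1 - x * (u + 1)) * v) := by rw [hv, mul_one]
        _ = ((u - 1) * (1 - x * (u + 1))) * v := by ring
        _ = 0 := by rw [hkey, zero_mul]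
    linear_combination h0
  calc (1 - x) ^ (a + 1) * psiN N (Bs a)
      = (1 - x) ^ (a + 1) * s ^ (a + 1) := by rw [hBC a, psiN_pow, hsdef]
    _ = u ^ (a + 1) := by rw [hudef, mul_pow]
    _ = 1 := by rw [hu, one_pow]

lemma coeff_one_sub_pow (d k : ℕ) :
    ((1 - Polynomial.X : Polynomial ℤ) ^ d).coeff k = (-1) ^ k * (d.choose k : ℤ) := by
  have h : (1 - Polynomial.X : Polynomial ℤ) = -(Polynomial.X + Polynomial.C (-1)) := by
    rw [map_neg, Polynomial.C_1]
    ring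
  rw [h, neg_pow, show ((-1 : Polynomial ℤ)) = Polynomial.C (-1) by rw [map_neg, Polynomial.C_1],
    ← Polynomial.C_pow, Polynomial.coeff_C_mul, Polynomial.coeff_X_add_C_pow]
  rcases le_or_gt k d with hk | hk
  · have hd : d - k + k = d := by omega
    have h2 : ((-1 : ℤ)) ^ (d - k) * (-1) ^ (d - k) = 1 := by
      rw [← pow_add]
      exact Even.neg_one_pow ⟨d - k, by ring⟩
    nth_rewrite 1 [← hd]
    rw [pow_add]
    linear_combination ((-1 : ℤ) ^ k * (d.choose k : ℤ)) * h2
  · rw [Nat.choose_eq_zero_of_lt hk]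
    push_cast
    ring

lemma coeff_main (a N : ℕ) :
    ∑ m ∈ Finset.range (N + 1), bc a m * ((-1 : ℤ) ^ (N - m) * ((a + m + 1).choose (N - m) : ℤ))
      = if N = 0 then 1 else 0 := by
  set P : Polynomial ℤ :=
    (1 - Polynomial.X) ^ (a + 1) * ((PowerSeries.trunc (N + 1) (Bs a)).comp qp) with hPdef
  have h1 : piN N P = 1 := by
    rw [hPdef, map_mul, map_pow, map_sub, map_one]
    exact main_quot N a
  have h2 : (Polynomial.X : Polynomial ℤ) ^ (N + 1) ∣ P - 1 := by
    rw [← Ideal.mem_span_singleton, ← Ideal.Quotient.eq_zero_iff_mem]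
    show piN N (P - 1) = 0
    rw [map_sub, h1, map_one, sub_self]
  have h3 : P.coeff N = if N = 0 then 1 else 0 := by
    have h4 := Polynomial.X_pow_dvd_iff.mp h2 N (lt_add_one N)
    rw [Polynomial.coeff_sub, sub_eq_zero] at h4
    rw [h4, Polynomial.coeff_one]
  rw [← h3, hPdef]
  have hexp : (PowerSeries.trunc (N + 1) (Bs a)).comp qp
      = ∑ m ∈ Finset.range (N + 1), Polynomial.C (bc a m) * qp ^ m := by
    rw [PowerSeries.trunc_apply, ← Finset.range_eq_Ico, Polynomial.sum_comp]
    refine Finset.sum_congr rfl fun m _ => ?_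
    rw [Polynomial.monomial_comp, Bs, PowerSeries.coeff_mk]
  rw [hexp, Finset.mul_sum, Polynomial.finset_sum_coeff]
  refine Finset.sum_congr rfl fun m hm => ?_
  have hmN : m ≤ N := by
    have := Finset.mem_range.mp hm; omega
  have hre : (1 - Polynomial.X : Polynomial ℤ) ^ (a + 1) * (Polynomial.C (bc a m) * qp ^ m)
      = Polynomial.C (bc a m) * (Polynomial.X ^ m * (1 - Polynomial.X) ^ (a + m + 1)) := by
    rw [qp, mul_pow, show a + m + 1 = (a + 1) + m by omega, pow_add]
    ring
  rw [hre, Polynomial.coeff_C_mul, show N = N - m + m by omega, Polynomial.coeff_X_pow_mul,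
    coeff_one_sub_pow, show N - m + m - m = N - m by omega]

/-- the two matrices are mutually inverse: `Σ_k C_{i,k} D_{k,j} = δ_{i,j}`.
Both matrices are upper triangular, so the sum may be restricted to `i ≤ k ≤ j`. -/
theorem catalanMat_mul_inv (i j : ℕ) :
    ∑ k ∈ Finset.Icc i j, catalanMat i k * catalanMatInv k j =
      if i = j then 1 else 0 := by
  by_cases hij : i ≤ j
  · obtain ⟨N, rfl⟩ : ∃ N, j = i + N := ⟨j - i, by omega⟩
    rw [show Finset.Icc i (i + N) = Finset.Ico i (i + N + 1) from (Finset.Ico_add_one_right_eq_Icc i (i+N)).symm,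
      Finset.sum_Ico_eq_sum_range, show i + N + 1 - i = N + 1 by omega]
    have hterm : ∀ m ∈ Finset.range (N + 1),
        catalanMat i (i + m) * catalanMatInv (i + m) (i + N)
          = bc i m * ((-1 : ℤ) ^ (N - m) * ((i + m + 1).choose (N - m) : ℤ)) := by
      intro m hm
      have hmN : m ≤ N := by have := Finset.mem_range.mp hm; omega
      rw [catalanMat_add]
      congr 1
      unfold catalanMatInv binomZ
      rw [show i + N - (i + m) = N - m by omega, if_pos (by push_cast; omega)]
      have harg : (((i + N : ℕ) : ℤ) - ((i + m : ℕ) : ℤ)).toNat = N - m := by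
        push_cast; omega
      rw [harg]
    rw [Finset.sum_congr rfl hterm, coeff_main i N]
    by_cases hN : N = 0
    · subst hN; simp
    · rw [if_neg hN, if_neg (by omega)]
  · rw [Finset.Icc_eq_empty (by omega), Finset.sum_empty, if_neg (by omega)]
end

section
/- For every m ≥ 0, the generating function Σ_{n≥0} |N_{m,n}| x^{m+n} equals x^m · C(x)^{m+1}, where N_{m,n} is the set of lattice paths with n upsteps (1,1) and m+n downsteps (1,-1) that never dip below the horizontal line through their terminal vertex, and C(x) is the Catalan generating function. -/
open PowerSeries


/-- condition -/
def Cond (m n : ℕ) (l : List Bool) : Prop :=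
  l.count true = n ∧ l.count false = m + n ∧
    ∀ s ∈ l.tails, s.count true ≤ s.count false

lemma count_tb (l : List Bool) : l.count true + l.count false = l.length := by
  induction l with
  | nil => simp
  | cons b t ih => cases b <;> simp [List.count_cons] <;> omega

lemma finiteCond (m n : ℕ) : Finite {l : List Bool // Cond m n l} := by
  have h : {l : List Bool | Cond m n l} ⊆ {l | l.length = n + (m + n)} := by
    rintro l ⟨h1, h2, -⟩
    have := count_tb l
    simp only [Set.mem_setOf_eq]; omega
  exact ((List.finite_length_eq _ _).subset h).to_subtype

lemma cond_cons_iff (m n : ℕ) (b : Bool) (t : List Bool)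
    (h : (b :: t).count true ≤ (b :: t).count false) :
    (∀ s ∈ (b :: t).tails, s.count true ≤ s.count false) ↔
      (∀ s ∈ t.tails, s.count true ≤ s.count false) := by
  rw [List.tails_cons]
  constructor
  · exact fun H s hs => H s (List.mem_cons_of_mem _ hs)
  · intro H s hs
    rw [List.mem_cons] at hs
    rcases hs with rfl | hs
    · exact h
    · exact H _ hs

lemma cond_cons_true (m n : ℕ) (t : List Bool) :
    Cond m (n + 1) (true :: t) ↔ Cond (m + 1) n t := by
  unfold Cond
  have hc : (true :: t).count true = t.count true + 1 := by simp
  have hc' : (true :: t).count false = t.count false := by simp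
  constructor
  · rintro ⟨h1, h2, h3⟩
    refine ⟨by omega, by omega, ?_⟩
    exact fun s hs => h3 s (by rw [List.tails_cons]; exact List.mem_cons_of_mem _ hs)
  · rintro ⟨h1, h2, h3⟩
    refine ⟨by omega, by omega, ?_⟩
    rw [cond_cons_iff m n true t (by omega)]
    exact h3

lemma cond_cons_false (m n : ℕ) (t : List Bool) :
    Cond (m + 1) n (false :: t) ↔ Cond m n t := by
  unfold Cond
  have hc : (false :: t).count true = t.count true := by simp
  have hc' : (false :: t).count false = t.count false + 1 := by simp
  constructor
  · rintro ⟨h1, h2, h3⟩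
    refine ⟨by omega, by omega, ?_⟩
    exact fun s hs => h3 s (by rw [List.tails_cons]; exact List.mem_cons_of_mem _ hs)
  · rintro ⟨h1, h2, h3⟩
    refine ⟨by omega, by omega, ?_⟩
    rw [cond_cons_iff m n false t (by omega)]
    exact h3
attribute [local instance] finiteCond





lemma card_zero (m : ℕ) : Nat.card {l : List Bool // Cond m 0 l} = 1 := by
  rw [Nat.card_eq_one_iff_unique]
  constructor
  · constructor
    rintro ⟨l, hl1, hl2, -⟩ ⟨l', hl1', hl2', -⟩
    have e : ∀ (x : List Bool), x.count true = 0 → x.count false = m →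
        x = List.replicate m false := by
      intro x h1 h2
      refine List.eq_replicate_iff.mpr ⟨?_, fun b hb => ?_⟩
      · have := count_tb x; omega
      · cases b
        · rfl
        · exact absurd hb (List.count_eq_zero.mp h1)
    apply Subtype.ext
    show l = l'
    rw [e _ hl1 (by omega), e _ hl1' (by omega)]
  · refine ⟨List.replicate m false, ?_, ?_, ?_⟩
    · simp [List.count_replicate]
    · simp [List.count_replicate]
    · intro s hs
      have hsub : s.Sublist (List.replicate m false) :=
        ((List.mem_tails _ _).mp hs).sublist
      have h1 : s.count true ≤ (List.replicate m false).count true := hsub.count_le _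
      have h2 : (List.replicate m false).count true = 0 := by
        simp [List.count_replicate]
      omega

lemma card_zero' (n : ℕ) :
    Nat.card {l : List Bool // Cond 0 (n + 1) l} = Nat.card {l : List Bool // Cond 1 n l} := by
  refine (Nat.card_eq_of_bijective
    (fun t => (⟨true :: t.1, (cond_cons_true 0 n t.1).mpr t.2⟩ :
      {l : List Bool // Cond 0 (n+1) l})) ⟨?_, ?_⟩).symm
  · rintro ⟨t, ht⟩ ⟨t', ht'⟩ h
    simpa [Subtype.ext_iff] using h
  · rintro ⟨l, hl⟩
    match l, hl with
    | [], hl => exact absurd hl.1 (by simp)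
    | false :: t, hl => 
      exfalso
      have hmem : t ∈ (false :: t).tails := by
        rw [List.mem_tails]; exact ⟨[false], rfl⟩
      have hle := hl.2.2 t hmem
      have h1 : (false :: t).count true = t.count true := by simp
      have h2 : (false :: t).count false = t.count false + 1 := by simp
      have := hl.1; have := hl.2.1; omega
    | true :: t, hl => exact ⟨⟨t, (cond_cons_true 0 n t).mp hl⟩, rfl⟩

lemma card_succ (m n : ℕ) :
    Nat.card {l : List Bool // Cond (m + 1) (n + 1) l} =
      Nat.card {l : List Bool // Cond (m + 2) n l} +
        Nat.card {l : List Bool // Cond m (n + 1) l} := by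
  rw [← Nat.card_sum]
  refine (Nat.card_eq_of_bijective
    (fun x => Sum.elim
      (fun t => (⟨true :: t.1, (cond_cons_true (m+1) n t.1).mpr t.2⟩ :
        {l : List Bool // Cond (m+1) (n+1) l}))
      (fun t => ⟨false :: t.1, (cond_cons_false m (n+1) t.1).mpr t.2⟩) x) ⟨?_, ?_⟩).symm
  · rintro (⟨t, ht⟩ | ⟨t, ht⟩) (⟨t', ht'⟩ | ⟨t', ht'⟩) h <;>
      simp_all [Subtype.ext_iff]
  · rintro ⟨l, hl⟩
    match l, hl with
    | [], hl => exact absurd hl.1 (by simp)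
    | true :: t, hl => exact ⟨Sum.inl ⟨t, (cond_cons_true (m+1) n t).mp hl⟩, rfl⟩
    | false :: t, hl => exact ⟨Sum.inr ⟨t, (cond_cons_false m (n+1) t).mp hl⟩, rfl⟩
noncomputable def Cps : PowerSeries ℕ := PowerSeries.mk fun n => catalan n

noncomputable def B (m n : ℕ) : ℕ := PowerSeries.coeff n (Cps ^ (m + 1))

lemma Cps_eq : Cps = 1 + PowerSeries.X * Cps ^ 2 := by
  ext N
  cases N with
  | zero => simp [Cps]
  | succ n =>
    rw [Cps, coeff_mk, map_add, pow_two, coeff_succ_X_mul, coeff_mul]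
    simp only [coeff_mk, coeff_one, Nat.succ_ne_zero, if_false, zero_add]
    rw [catalan_succ']

lemma B_zero (m : ℕ) : B m 0 = 1 := by
  rw [B, coeff_zero_eq_constantCoeff, map_pow]
  have : constantCoeff Cps = 1 := by
    rw [Cps, ← coeff_zero_eq_constantCoeff, coeff_mk, catalan_zero]
  rw [this, one_pow]

lemma B_zero' (n : ℕ) : B 0 (n + 1) = B 1 n := by
  rw [B, B, pow_one]
  conv_lhs => rw [Cps_eq]
  rw [map_add, coeff_one, if_neg (Nat.succ_ne_zero n), zero_add, coeff_succ_X_mul]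

lemma B_succ (m n : ℕ) : B (m + 1) (n + 1) = B (m + 2) n + B m (n + 1) := by
  have h : Cps ^ (m + 2) = Cps ^ (m + 1) + PowerSeries.X * Cps ^ (m + 3) := by
    calc Cps ^ (m + 2) = Cps ^ (m + 1) * Cps := by ring
    _ = Cps ^ (m + 1) * (1 + PowerSeries.X * Cps ^ 2) := by rw [← Cps_eq]
    _ = Cps ^ (m + 1) + PowerSeries.X * Cps ^ (m + 3) := by ring
  rw [B, h, map_add, coeff_succ_X_mul]
  rw [add_comm]
  rfl

/-- `N m n`: the number of lattice paths (encoded as lists of `Bool`, `true` = upstep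
`(1,1)`, `false` = downstep `(1,-1)`, read left to right) with `n` upsteps and `m + n`
downsteps that never dip below the horizontal line through their terminal vertex
(equivalently, every suffix has at least as many downsteps as upsteps). -/
noncomputable def Npaths (m n : ℕ) : ℕ :=
  Nat.card {l : List Bool // l.count true = n ∧ l.count false = m + n ∧
    ∀ s ∈ l.tails, s.count true ≤ s.count false}

lemma npaths_card (m n : ℕ) : Npaths m n = Nat.card {l : List Bool // Cond m n l} := rfl

lemma npaths_eq_B : ∀ n m, Npaths m n = B m n := by
  intro n
  induction n with
  | zero => intro m; rw [npaths_card, card_zero, B_zero]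
  | succ n ih =>
    intro m
    induction m with
    | zero =>
      rw [npaths_card, card_zero', ← npaths_card, ih 1, B_zero']
    | succ m ihm =>
      rw [npaths_card, card_succ, ← npaths_card, ← npaths_card, ih (m + 2), ihm, B_succ]

/-- `Σ_n |N_{m,n}| x^{m+n} = x^m · C(x)^{m+1}`. -/
theorem npaths_gf (m : ℕ) :
    (PowerSeries.mk fun N => if m ≤ N then Npaths m (N - m) else 0 : PowerSeries ℕ) =
      PowerSeries.X ^ m * (PowerSeries.mk fun n => catalan n) ^ (m + 1) := by
  have hC : (PowerSeries.mk fun n => (catalan n : ℕ)) = Cps := rfl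
  rw [hC]
  ext N
  rw [coeff_mk, coeff_X_pow_mul']
  split_ifs with h
  · rw [npaths_eq_B, B]
  · rfl
end

section
/- Fix a run-free standard s-partition π of size k, and let F(n) be the set of standard s-partitions of size n obtainable from π by successively inserting runs. For n > k, the run-deletion sequences of members of F(n), recorded as first entries (a_1,...,a_r) and lengths (ℓ_1,...,ℓ_r) in reverse order of deletion, are exactly the sequences with r ≥ 1, all a_i, ℓ_i positive integers, k + ℓ_1 + ... + ℓ_r = n, a_1 < a_2 < ... < a_r, and a_i ≤ k + ℓ_1 + ... + ℓ_{i-1} + 1 for each 1 ≤ i ≤ r. Consequently, the number of s-partitions of size n that prune to π depends only on k, not on π itself. -/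
/-- The size of an s-partition (a set of lists): the total number of entries. -/
def sizeS (π : Finset (List ℕ)) : ℕ := π.sum List.length

/-- `π` is a standard s-partition of size `n`: a set of nonempty lists whose entries,
taken all together, are exactly `1, 2, ..., n` (each appearing once). -/
def IsStdSPart (π : Finset (List ℕ)) (n : ℕ) : Prop :=
  [] ∉ π ∧ π.val.bind (fun l => (l : Multiset ℕ)) = (Finset.Icc 1 n).val

/-- A block is a run if it consists of increasing consecutive integers. -/
def IsRunBlock (l : List ℕ) : Prop := ∃ a, 1 ≤ a ∧ l = List.range' a l.length

/-- `π` is run-free: no block is a run. -/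
def RunFree (π : Finset (List ℕ)) : Prop := ∀ l ∈ π, ¬IsRunBlock l

/-- Insert the run `i+1, ..., i+j` into `π`: increment all entries exceeding `i` by `j`
and adjoin the run as a new block. -/
def insertRun (π : Finset (List ℕ)) (i j : ℕ) : Finset (List ℕ) :=
  π.image (List.map fun m => if i < m then m + j else m) ∪ {List.range' (i + 1) j}

/-- One insertion of a (nonempty) run at a valid position. -/
def InsertStep (σ τ : Finset (List ℕ)) : Prop :=
  ∃ i j, 1 ≤ j ∧ i ≤ sizeS σ ∧ τ = insertRun σ i j

/-- `ρ` is obtainable from `π` by successively inserting runs. -/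
def ReachableFrom (π ρ : Finset (List ℕ)) : Prop := Relation.ReflTransGen InsertStep π ρ
/-- Admissible run-deletion sequences for a run-free s-partition of size `k` and target
size `n`, recorded as pairs (first entry `a_i`, length `ℓ_i`) in reverse order of
deletion: all entries positive, `k + ℓ_1 + ... + ℓ_r = n`, `a_1 < a_2 < ... < a_r`, and
`a_i ≤ k + ℓ_1 + ... + ℓ_{i-1} + 1` for each `i`. -/
def Admissible (k n : ℕ) (s : List (ℕ × ℕ)) : Prop :=
  s ≠ [] ∧ (∀ p ∈ s, 1 ≤ p.1 ∧ 1 ≤ p.2) ∧ k + (s.map Prod.snd).sum = n ∧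
    List.Chain' (· < ·) (s.map Prod.fst) ∧
    ∀ t < s.length, (s.getD t (0, 0)).1 ≤ k + ((s.take t).map Prod.snd).sum + 1

/-- Build an s-partition from `π` by inserting the runs recorded in `s`, in order:
the pair `(a, ℓ)` inserts the run `a, a+1, ..., a+ℓ-1`. -/
def buildFrom (π : Finset (List ℕ)) (s : List (ℕ × ℕ)) : Finset (List ℕ) :=
  s.foldl (fun σ p => insertRun σ (p.1 - 1) p.2) π

def shiftF (i j m : ℕ) : ℕ := if i < m then m + j else m

lemma shiftF_strictMono (i j : ℕ) : StrictMono (shiftF i j) := by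
  intro a b h; unfold shiftF; split <;> split <;> omega

lemma shiftF_inj (i j : ℕ) : Function.Injective (shiftF i j) :=
  (shiftF_strictMono i j).injective

lemma insertRun_eq (π : Finset (List ℕ)) (i j : ℕ) :
    insertRun π i j = π.image (List.map (shiftF i j)) ∪ {List.range' (i + 1) j} := rfl

lemma std_size {π : Finset (List ℕ)} {n : ℕ} (h : IsStdSPart π n) : sizeS π = n := by
  have := congrArg Multiset.card h.2
  rw [Multiset.card_bind] at this
  have hc : Multiset.card (Finset.Icc 1 n).val = n := by
    rw [← Finset.card_def, Nat.card_Icc]; omega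
  rw [hc] at this
  rw [← this, sizeS, Finset.sum]
  congr 1

lemma mem_Icc_val {a b m : ℕ} : m ∈ (Finset.Icc a b).val ↔ a ≤ m ∧ m ≤ b := by
  rw [← Finset.mem_def]; exact Finset.mem_Icc

-- key multiset identity
lemma shift_Icc_add_run {N i j : ℕ} (hi : i ≤ N) :
    (Finset.Icc 1 N).val.map (shiftF i j) + (List.range' (i + 1) j : Multiset ℕ)
      = (Finset.Icc 1 (N + j)).val := by
  apply Multiset.Nodup.ext ?_ (Finset.Icc 1 (N + j)).nodup |>.mpr
  · intro m
    simp only [Multiset.mem_add, Multiset.mem_map, mem_Icc_val, Multiset.mem_coe,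
      List.mem_range']
    constructor
    · rintro (⟨y, ⟨h1, h2⟩, rfl⟩ | ⟨w, hw, rfl⟩)
      · unfold shiftF; split <;> omega
      · omega
    · intro hm
      by_cases hsm : m ≤ i
      · exact Or.inl ⟨m, by omega, by unfold shiftF; split <;> omega⟩
      · by_cases hsm2 : m ≤ i + j
        · exact Or.inr ⟨m - (i+1), by omega, by omega⟩
        · exact Or.inl ⟨m - j, by omega, by unfold shiftF; split <;> omega⟩
  · rw [Multiset.nodup_add]
    refine ⟨Multiset.Nodup.map (shiftF_inj i j) (Finset.Icc 1 N).nodup, ?_, ?_⟩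
    · exact Multiset.coe_nodup.mpr (by simp [List.nodup_range'])
    · rw [Multiset.disjoint_left]
      intro m hmem hm
      rw [Multiset.mem_map] at hmem
      obtain ⟨y, hy, rfl⟩ := hmem
      rw [mem_Icc_val] at hy
      rw [Multiset.mem_coe, List.mem_range'] at hm
      unfold shiftF at hm; split at hm <;> omega

lemma mem_image_part {σ : Finset (List ℕ)} {i j : ℕ} {l : List ℕ}
    (hl : l ∈ σ.image (List.map (shiftF i j))) {m : ℕ} (hm : m ∈ l) :
    m ≤ i ∨ i + j < m := by
  rw [Finset.mem_image] at hl
  obtain ⟨l', _, rfl⟩ := hl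
  rw [List.mem_map] at hm
  obtain ⟨y, _, rfl⟩ := hm
  unfold shiftF; split <;> omega

lemma run_not_mem_image {σ : Finset (List ℕ)} {i j : ℕ} (hj : 1 ≤ j) :
    List.range' (i + 1) j ∉ σ.image (List.map (shiftF i j)) := by
  intro h
  have : (i + 1) ∈ List.range' (i + 1) j := by
    rw [List.mem_range'_1]; omega
  rcases mem_image_part h this with h' | h' <;> omega

lemma insertRun_val {σ : Finset (List ℕ)} {i j : ℕ} (hj : 1 ≤ j) :
    (insertRun σ i j).val = List.range' (i + 1) j ::ₘ σ.val.map (List.map (shiftF i j)) := by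
  rw [insertRun_eq, Finset.union_comm, ← Finset.insert_eq,
    Finset.insert_val_of_notMem (run_not_mem_image hj),
    Finset.image_val_of_injOn (Function.Injective.injOn
      (List.map_injective_iff.mpr (shiftF_inj i j)))]

lemma std_insertRun {σ : Finset (List ℕ)} {N i j : ℕ} (hstd : IsStdSPart σ N)
    (hi : i ≤ N) (hj : 1 ≤ j) : IsStdSPart (insertRun σ i j) (N + j) := by
  constructor
  · intro h
    rw [insertRun_eq, Finset.mem_union] at h
    rcases h with h | h
    · rw [Finset.mem_image] at h
      obtain ⟨l', hl', he⟩ := h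
      rw [List.map_eq_nil_iff] at he
      exact hstd.1 (he ▸ hl')
    · rw [Finset.mem_singleton] at h
      have : (List.range' (i+1) j).length = 0 := by rw [← h]; rfl
      rw [List.length_range'] at this
      omega
  · rw [insertRun_val hj, Multiset.cons_bind, Multiset.bind_map]
    have : ((σ.val.bind fun l => (l : Multiset ℕ)).map (shiftF i j))
        = (Finset.Icc 1 N).val.map (shiftF i j) := by rw [hstd.2]
    rw [show (fun l : List ℕ => ((List.map (shiftF i j) l : List ℕ) : Multiset ℕ))
        = (fun l : List ℕ => Multiset.map (shiftF i j) (l : Multiset ℕ)) from rfl,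
      ← Multiset.map_bind, hstd.2, add_comm]
    exact shift_Icc_add_run hi


def Valid : ℕ → List (ℕ × ℕ) → Prop
  | _, [] => True
  | k, p :: t => 1 ≤ p.1 ∧ 1 ≤ p.2 ∧ p.1 ≤ k + 1 ∧ Valid (k + p.2) t

lemma buildFrom_nil (π : Finset (List ℕ)) : buildFrom π [] = π := rfl
lemma buildFrom_cons (π : Finset (List ℕ)) (p : ℕ × ℕ) (t : List (ℕ × ℕ)) :
    buildFrom π (p :: t) = buildFrom (insertRun π (p.1 - 1) p.2) t := rfl
lemma buildFrom_append (π : Finset (List ℕ)) (s t : List (ℕ × ℕ)) :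
    buildFrom π (s ++ t) = buildFrom (buildFrom π s) t := List.foldl_append ..

lemma std_build {π : Finset (List ℕ)} {k : ℕ} {s : List (ℕ × ℕ)}
    (hstd : IsStdSPart π k) (hv : Valid k s) :
    IsStdSPart (buildFrom π s) (k + (s.map Prod.snd).sum) := by
  induction s generalizing π k with
  | nil => simpa [buildFrom_nil] using hstd
  | cons p t ih =>
    obtain ⟨h1, h2, h3, h4⟩ := hv
    rw [buildFrom_cons]
    have := ih (std_insertRun hstd (by omega : p.1 - 1 ≤ k) h2) h4
    rw [show k + p.2 + (t.map Prod.snd).sum = k + ((p :: t).map Prod.snd).sum by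
      simp; omega] at this
    exact this

lemma reach_build {π : Finset (List ℕ)} {k : ℕ} {s : List (ℕ × ℕ)}
    (hstd : IsStdSPart π k) (hv : Valid k s) : ReachableFrom π (buildFrom π s) := by
  induction s generalizing π k with
  | nil => exact Relation.ReflTransGen.refl
  | cons p t ih =>
    obtain ⟨h1, h2, h3, h4⟩ := hv
    rw [buildFrom_cons]
    refine Relation.ReflTransGen.head ⟨p.1 - 1, p.2, h2, ?_, rfl⟩
      (ih (std_insertRun hstd (by omega) h2) h4)
    rw [std_size hstd]; omega

lemma shiftF_comp {i i' j j' : ℕ} (h : i' ≤ i) :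
    shiftF i' j' ∘ shiftF i j = shiftF (i + j') j ∘ shiftF i' j' := by
  funext m
  simp only [Function.comp, shiftF]
  split_ifs <;> omega

lemma map_range'_of_gt {i' j' a n : ℕ} (h : i' < a) :
    (List.range' a n).map (shiftF i' j') = List.range' (a + j') n := by
  rw [show List.range' (a + j') n = List.range' (j' + a) n by ring_nf]
  rw [← List.map_add_range']
  apply List.map_congr_left
  intro m hm
  rw [List.mem_range'_1] at hm
  unfold shiftF; split <;> omega

lemma map_range'_of_le {i j a n : ℕ} (h : a + n ≤ i + 1) :
    (List.range' a n).map (shiftF i j) = List.range' a n := by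
  have h2 : ∀ m ∈ List.range' a n, shiftF i j m = id m := by
    intro m hm; rw [List.mem_range'_1] at hm; simp only [id_eq, shiftF]; split <;> omega
  rw [List.map_congr_left h2, List.map_id]

lemma insertRun_swap {σ : Finset (List ℕ)} {i i' j j' : ℕ} (h : i' ≤ i) :
    insertRun (insertRun σ i j) i' j' = insertRun (insertRun σ i' j') (i + j') j := by
  simp only [insertRun_eq, Finset.image_union]
  rw [Finset.image_image, Finset.image_image]
  have e1 : List.map (shiftF i' j') ∘ List.map (shiftF i j)
      = List.map (shiftF (i + j') j) ∘ List.map (shiftF i' j') := by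
    funext l; simp [List.map_map, shiftF_comp h]
  rw [e1]
  have e2 : Finset.image (List.map (shiftF i' j')) {List.range' (i + 1) j}
      = ({List.range' (i + j' + 1) j} : Finset (List ℕ)) := by
    rw [Finset.image_singleton, map_range'_of_gt (by omega),
      show i + 1 + j' = i + j' + 1 by omega]
  have e3 : Finset.image (List.map (shiftF (i + j') j)) {List.range' (i' + 1) j'}
      = ({List.range' (i' + 1) j'} : Finset (List ℕ)) := by
    rw [Finset.image_singleton, map_range'_of_le (by omega)]
  rw [e2, e3]
  ac_rfl

def unshiftF (i j m : ℕ) : ℕ := if i + j < m then m - j else m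

lemma unshift_shift (i j : ℕ) : (unshiftF i j) ∘ (shiftF i j) = id := by
  funext m; simp only [Function.comp, shiftF, unshiftF, id_eq]
  split_ifs <;> omega

def deleteRun (ρ : Finset (List ℕ)) (a ℓ : ℕ) : Finset (List ℕ) :=
  (ρ.erase (List.range' a ℓ)).image (List.map (unshiftF (a - 1) ℓ))

lemma deleteRun_insertRun {σ : Finset (List ℕ)} {i j : ℕ} (hj : 1 ≤ j) :
    deleteRun (insertRun σ i j) (i + 1) j = σ := by
  unfold deleteRun
  rw [show i + 1 - 1 = i by omega]
  rw [insertRun_eq, Finset.union_comm, ← Finset.insert_eq,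
    Finset.erase_insert (run_not_mem_image hj), Finset.image_image]
  have : List.map (unshiftF i j) ∘ List.map (shiftF i j) = id := by
    funext l; simp [List.map_map, unshift_shift]
  rw [this, Finset.image_id]

lemma headI_mem {l : List ℕ} (h : l ≠ []) : l.headI ∈ l := by
  cases l with
  | nil => exact absurd rfl h
  | cons x t => exact List.mem_cons_self

lemma std_entries {σ : Finset (List ℕ)} {N : ℕ} (hstd : IsStdSPart σ N)
    {l : List ℕ} (hl : l ∈ σ) {m : ℕ} (hm : m ∈ l) : 1 ≤ m ∧ m ≤ N := by
  have : m ∈ σ.val.bind (fun l => (l : Multiset ℕ)) := by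
    rw [Multiset.mem_bind]; exact ⟨l, hl, by simpa using hm⟩
  rw [hstd.2, mem_Icc_val] at this; exact this

lemma chain'_range' (a n : ℕ) : (List.range' a n).Chain' (fun x y => y = x + 1) := by
  induction n generalizing a with
  | zero => simp [List.Chain']
  | succ n ih =>
    rw [List.range'_succ]
    cases n with
    | zero => simp [List.Chain']
    | succ n =>
      unfold List.Chain'
      rw [List.isChain_cons]
      refine ⟨fun y hy => ?_, ih (a+1)⟩
      rw [List.range'_succ] at hy
      simp at hy; omega

lemma chain'_eq_range' {l : List ℕ} (h : l.Chain' (fun x y => y = x + 1)) :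
    l = List.range' l.headI l.length := by
  induction l with
  | nil => rfl
  | cons x t ih =>
    unfold List.Chain' at h
    rw [List.isChain_cons] at h
    cases t with
    | nil => simp [List.range'_succ]
    | cons y t' =>
      have hy : y = x + 1 := h.1 y rfl
      have this2 : y :: t' = List.range' y (t'.length + 1) := by simpa using ih h.2
      have hr : List.range' (x :: y :: t').headI (x :: y :: t').length
          = x :: List.range' (x + 1) (t'.length + 1) := by
        simp [List.range'_succ]
      rw [hr, ← hy, this2]

lemma isRunBlock_iff {l : List ℕ} (hne : l ≠ []) :
    IsRunBlock l ↔ 1 ≤ l.headI ∧ l.Chain' (fun x y => y = x + 1) := by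
  constructor
  · rintro ⟨a, ha, he⟩
    have hl : l.headI = a := by
      cases l with
      | nil => exact absurd rfl hne
      | cons x t =>
        rw [List.length_cons, List.range'_succ] at he
        simpa using congrArg List.headI he
    rw [hl]
    exact ⟨ha, by rw [he]; exact chain'_range' _ _⟩
  · rintro ⟨h1, h2⟩
    exact ⟨l.headI, h1, chain'_eq_range' h2⟩

lemma headI_map {f : ℕ → ℕ} {l : List ℕ} (h : l ≠ []) :
    (l.map f).headI = f l.headI := by
  cases l with
  | nil => exact absurd rfl h
  | cons x t => rfl

lemma run_of_map_run {i j : ℕ} {l : List ℕ} (hne : l ≠ [])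
    (hh : 1 ≤ l.headI) (hr : IsRunBlock (l.map (shiftF i j))) : IsRunBlock l := by
  rw [isRunBlock_iff (by simpa using hne)] at hr
  rw [isRunBlock_iff hne]
  refine ⟨hh, ?_⟩
  unfold List.Chain' at hr
  rw [List.isChain_map] at hr
  refine hr.2.imp (fun {x y} hxy => ?_)
  simp only [shiftF] at hxy
  split_ifs at hxy <;> omega

lemma headI_range' {a j : ℕ} (hj : 1 ≤ j) : (List.range' a j).headI = a := by
  cases j with
  | zero => omega
  | succ n => rw [List.range'_succ]; rfl

lemma run_of_insertRun {σ : Finset (List ℕ)} {N i j : ℕ} (hstd : IsStdSPart σ N) :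
    ∀ l ∈ insertRun σ i j, IsRunBlock l →
      l = List.range' (i + 1) j ∨
        ∃ l₀ ∈ σ, IsRunBlock l₀ ∧ l.headI = shiftF i j l₀.headI := by
  intro l hl hrun
  rw [insertRun_eq, Finset.mem_union] at hl
  rcases hl with hl | hl
  · right
    rw [Finset.mem_image] at hl
    obtain ⟨l₀, hl₀, rfl⟩ := hl
    have hne : l₀ ≠ [] := fun h => hstd.1 (h ▸ hl₀)
    have hh : 1 ≤ l₀.headI := (std_entries hstd hl₀ (headI_mem hne)).1
    exact ⟨l₀, hl₀, run_of_map_run hne hh hrun, headI_map hne⟩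
  · left; exact Finset.mem_singleton.mp hl

lemma runs_build_gen : ∀ (t : List (ℕ × ℕ)) {σ : Finset (List ℕ)} {N : ℕ},
    IsStdSPart σ N → Valid N t → (t.map Prod.fst).Pairwise (· < ·) →
    (∀ l ∈ σ, IsRunBlock l → ∀ p ∈ t, l.headI < p.1) →
    ∀ l ∈ buildFrom σ t, IsRunBlock l →
      (∃ l₀ ∈ σ, IsRunBlock l₀ ∧ l₀.headI = l.headI) ∨ l.headI ∈ t.map Prod.fst := by
  intro t
  induction t with
  | nil => intro σ N _ _ _ _ l hl hrun; exact Or.inl ⟨l, hl, hrun, rfl⟩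
  | cons p u ih =>
    intro σ N hstd hv hsort hlow l hl hrun
    obtain ⟨h1, h2, h3, h4⟩ := hv
    have hstd' : IsStdSPart (insertRun σ (p.1 - 1) p.2) (N + p.2) :=
      std_insertRun hstd (by omega) h2
    rw [List.map_cons, List.pairwise_cons] at hsort
    have hlow' : ∀ l' ∈ insertRun σ (p.1 - 1) p.2, IsRunBlock l' →
        ∀ q ∈ u, l'.headI < q.1 := by
      intro l' hl' hrun' q hq
      rcases run_of_insertRun hstd l' hl' hrun' with he | ⟨l₀, hl₀, hrun₀, hhd⟩
      · rw [he, headI_range' h2, show p.1 - 1 + 1 = p.1 by omega]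
        exact hsort.1 q.1 (List.mem_map_of_mem (f := Prod.fst) hq)
      · have hlt : l₀.headI < p.1 := hlow l₀ hl₀ hrun₀ p List.mem_cons_self
        have : shiftF (p.1 - 1) p.2 l₀.headI = l₀.headI := by
          unfold shiftF; split <;> omega
        rw [hhd, this]
        exact hlow l₀ hl₀ hrun₀ q (List.mem_cons_of_mem _ hq)
    rw [buildFrom_cons] at hl
    rcases ih hstd' h4 hsort.2 hlow' l hl hrun with ⟨l₀, hl₀, hrun₀, hhd⟩ | hmem
    · rcases run_of_insertRun hstd l₀ hl₀ hrun₀ with he | ⟨l₁, hl₁, hrun₁, hhd₁⟩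
      · right
        rw [← hhd, he, headI_range' h2, show p.1 - 1 + 1 = p.1 by omega]
        simp
      · left
        have hlt : l₁.headI < p.1 := hlow l₁ hl₁ hrun₁ p List.mem_cons_self
        have : shiftF (p.1 - 1) p.2 l₁.headI = l₁.headI := by
          unfold shiftF; split <;> omega
        exact ⟨l₁, hl₁, hrun₁, by rw [← hhd, hhd₁, this]⟩
    · right; exact List.mem_cons_of_mem _ hmem

lemma runs_build {π : Finset (List ℕ)} {k : ℕ} {s : List (ℕ × ℕ)}
    (hstd : IsStdSPart π k) (hrf : RunFree π) (hv : Valid k s)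
    (hsort : (s.map Prod.fst).Pairwise (· < ·)) :
    ∀ l ∈ buildFrom π s, IsRunBlock l → l.headI ∈ s.map Prod.fst := by
  intro l hl hrun
  rcases runs_build_gen s hstd hv hsort
      (fun l₀ hl₀ hrun₀ => absurd hrun₀ (hrf l₀ hl₀)) l hl hrun with
    ⟨l₀, hl₀, hrun₀, _⟩ | h
  · exact absurd hrun₀ (hrf l₀ hl₀)
  · exact h

lemma std_unique_block {σ : Finset (List ℕ)} {N : ℕ} (hstd : IsStdSPart σ N)
    {l1 l2 : List ℕ} (h1 : l1 ∈ σ) (h2 : l2 ∈ σ) {m : ℕ}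
    (hm1 : m ∈ l1) (hm2 : m ∈ l2) : l1 = l2 := by
  by_contra hne
  have hnd : (σ.val.bind (fun l => (l : Multiset ℕ))).Nodup := by
    rw [hstd.2]; exact (Finset.Icc 1 N).nodup
  have hc : σ.val = l1 ::ₘ σ.val.erase l1 := (Multiset.cons_erase h1).symm
  rw [hc, Multiset.cons_bind, Multiset.nodup_add] at hnd
  have hm2' : m ∈ (σ.val.erase l1).bind (fun l => (l : Multiset ℕ)) := by
    rw [Multiset.mem_bind]
    exact ⟨l2, (Multiset.mem_erase_of_ne (Ne.symm hne)).mpr h2, by simpa using hm2⟩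
  exact Multiset.disjoint_left.mp hnd.2.2 (by simpa using hm1) hm2'

lemma lastRun_mem {π : Finset (List ℕ)} {u : List (ℕ × ℕ)} {a ℓ : ℕ} (ha : 1 ≤ a) :
    List.range' a ℓ ∈ buildFrom π (u ++ [(a, ℓ)]) := by
  rw [buildFrom_append, buildFrom_cons, buildFrom_nil, insertRun_eq, Finset.mem_union]
  right
  rw [Finset.mem_singleton, show a - 1 + 1 = a by omega]

lemma valid_all_pos : ∀ (s : List (ℕ × ℕ)) {k}, Valid k s → ∀ p ∈ s, 1 ≤ p.1 ∧ 1 ≤ p.2 := by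
  intro s
  induction s with
  | nil => intro k _ p hp; simp at hp
  | cons q u ih =>
    intro k hv p hp
    rcases List.mem_cons.mp hp with rfl | hp
    · exact ⟨hv.1, hv.2.1⟩
    · exact ih hv.2.2.2 p hp

lemma valid_concat : ∀ (t : List (ℕ × ℕ)) {k a ℓ}, Valid k t → 1 ≤ a →
    a ≤ k + (t.map Prod.snd).sum + 1 → 1 ≤ ℓ → Valid k (t ++ [(a, ℓ)]) := by
  intro t
  induction t with
  | nil => intro k a ℓ _ ha hak hℓ; exact ⟨ha, hℓ, by simpa using hak, trivial⟩
  | cons q u ih =>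
    intro k a ℓ hv ha hak hℓ
    exact ⟨hv.1, hv.2.1, hv.2.2.1, ih hv.2.2.2 ha (by simp at hak ⊢; omega) hℓ⟩

lemma valid_prefix : ∀ (t : List (ℕ × ℕ)) {k p}, Valid k (t ++ [p]) → Valid k t := by
  intro t
  induction t with
  | nil => intro _ _ _; trivial
  | cons q u ih =>
    intro k p hv
    exact ⟨hv.1, hv.2.1, hv.2.2.1, ih hv.2.2.2⟩

lemma valid_iff : ∀ (s : List (ℕ × ℕ)) {k}, Valid k s ↔
    ((∀ p ∈ s, 1 ≤ p.1 ∧ 1 ≤ p.2) ∧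
      ∀ t < s.length, (s.getD t (0, 0)).1 ≤ k + ((s.take t).map Prod.snd).sum + 1) := by
  intro s
  induction s with
  | nil => intro k; simp [Valid]
  | cons q u ih =>
    intro k
    constructor
    · intro hv
      refine ⟨valid_all_pos _ hv, ?_⟩
      intro t ht
      cases t with
      | zero => simpa using hv.2.2.1
      | succ τ =>
        have h2 := ((ih (k := k + q.2)).mp hv.2.2.2).2 τ (by simpa using ht)
        simp only [List.getD_cons_succ, List.take_succ_cons, List.map_cons, List.sum_cons]
        omega
    · rintro ⟨hpos, hidx⟩
      refine ⟨(hpos q List.mem_cons_self).1, (hpos q List.mem_cons_self).2, ?_, ?_⟩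
      · simpa using hidx 0 (by simp)
      · rw [ih]
        refine ⟨fun p hp => hpos p (List.mem_cons_of_mem _ hp), ?_⟩
        intro t ht
        have := hidx (t + 1) (by simpa using ht)
        simp only [List.getD_cons_succ, List.take_succ_cons, List.map_cons, List.sum_cons] at this
        omega

lemma admissible_iff {k n : ℕ} {s : List (ℕ × ℕ)} : Admissible k n s ↔
    (s ≠ [] ∧ Valid k s ∧ k + (s.map Prod.snd).sum = n ∧
      (s.map Prod.fst).Pairwise (· < ·)) := by
  unfold Admissible
  unfold List.Chain'
  rw [valid_iff, List.isChain_iff_pairwise]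
  tauto

lemma insert_sorted : ∀ (s' : List (ℕ × ℕ)) {k a ℓ : ℕ}, 1 ≤ a → 1 ≤ ℓ → a ≤ k + 1 →
    Valid (k + ℓ) s' → (s'.map Prod.fst).Pairwise (· < ·) →
    ∃ s'', Valid k s'' ∧ (s''.map Prod.fst).Pairwise (· < ·) ∧
      (∀ σ, buildFrom σ ((a, ℓ) :: s') = buildFrom σ s'') ∧
      (s''.map Prod.snd).sum = ℓ + (s'.map Prod.snd).sum ∧ s'' ≠ [] ∧
      (∀ c, c < a → (∀ p ∈ s', c < p.1) → ∀ p ∈ s'', c < p.1) := by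
  intro s'
  induction s' with
  | nil =>
    intro k a ℓ ha hℓ hak _ _
    refine ⟨[(a, ℓ)], ⟨ha, hℓ, hak, trivial⟩, by simp, fun σ => rfl, by simp, by simp, ?_⟩
    rintro c hc - p hp
    rcases List.mem_singleton.mp hp with rfl
    simpa using hc
  | cons q u ih =>
    intro k a ℓ ha hℓ hak hv hsort
    obtain ⟨hb, hm, hbk, hvu⟩ := hv
    rw [List.map_cons, List.pairwise_cons] at hsort
    by_cases hab : a < q.1
    · refine ⟨(a, ℓ) :: q :: u, ⟨ha, hℓ, hak, hb, hm, hbk, hvu⟩, ?_, fun σ => rfl, by simp, by simp, ?_⟩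
      · rw [List.map_cons, List.pairwise_cons, List.map_cons, List.pairwise_cons]
        refine ⟨?_, hsort⟩
        intro x hx
        rcases List.mem_cons.mp hx with rfl | hx
        · exact hab
        · exact lt_trans hab (hsort.1 x hx)
      · intro c hc hall p hp
        rcases List.mem_cons.mp hp with rfl | hp
        · simpa using hc
        · exact hall p hp
    · push_neg at hab
      -- swap and recurse
      obtain ⟨s₀, hs₀v, hs₀sort, hs₀build, hs₀sum, hs₀ne, hs₀cond⟩ :=
        ih (k := k + q.2) (a := a + q.2) (ℓ := ℓ) (by omega) hℓ (by omega)
          (by rw [show k + q.2 + ℓ = k + ℓ + q.2 by omega]; exact hvu) hsort.2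
      refine ⟨q :: s₀, ⟨hb, hm, by omega, hs₀v⟩, ?_, ?_, ?_, by simp, ?_⟩
      · rw [List.map_cons, List.pairwise_cons]
        refine ⟨?_, hs₀sort⟩
        intro x hx
        rw [List.mem_map] at hx
        obtain ⟨p, hp, rfl⟩ := hx
        exact hs₀cond q.1 (by omega) (fun r hr => hsort.1 r.1 (List.mem_map_of_mem hr)) p hp
      · intro σ
        have hswap : buildFrom σ ((a, ℓ) :: q :: u) = buildFrom σ (q :: (a + q.2, ℓ) :: u) := by
          rw [buildFrom_cons, buildFrom_cons, buildFrom_cons, buildFrom_cons]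
          congr 1
          rw [show a + q.2 - 1 = (a - 1) + q.2 by omega]
          exact insertRun_swap (by omega)
        rw [hswap, buildFrom_cons, hs₀build, ← buildFrom_cons]
      · simp only [List.map_cons, List.sum_cons, hs₀sum, List.map_cons, List.sum_cons]
        omega
      · intro c hc hall p hp
        rcases List.mem_cons.mp hp with rfl | hp
        · exact hall p List.mem_cons_self
        · exact hs₀cond c (by omega) (fun x hx => hall x (List.mem_cons_of_mem _ hx)) p hp

lemma sort_valid : ∀ (t : List (ℕ × ℕ)) {k : ℕ}, Valid k t →
    ∃ s, Valid k s ∧ (s.map Prod.fst).Pairwise (· < ·) ∧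
      (∀ σ, buildFrom σ t = buildFrom σ s) ∧
      (s.map Prod.snd).sum = (t.map Prod.snd).sum ∧ (t ≠ [] → s ≠ []) := by
  intro t
  induction t with
  | nil => intro k _; exact ⟨[], trivial, by simp, fun σ => rfl, rfl, by simp⟩
  | cons q u ih =>
    intro k hv
    obtain ⟨ha, hℓ, hak, hvu⟩ := hv
    obtain ⟨s₁, hs₁v, hs₁sort, hs₁build, hs₁sum, _⟩ := ih hvu
    obtain ⟨s'', h''v, h''sort, h''build, h''sum, h''ne, _⟩ :=
      insert_sorted s₁ ha hℓ hak hs₁v hs₁sort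
    refine ⟨s'', h''v, h''sort, ?_, ?_, fun _ => h''ne⟩
    · intro σ
      rw [← h''build σ, buildFrom_cons, buildFrom_cons, hs₁build]
    · rw [h''sum, hs₁sum]; simp

lemma eq_nil_or_append (l : List (ℕ × ℕ)) : l = [] ∨ ∃ u p, l = u ++ [p] := by
  rcases List.eq_nil_or_concat l with h | ⟨u, p, h⟩
  · exact Or.inl h
  · exact Or.inr ⟨u, p, by rw [h, List.concat_eq_append]⟩

lemma isRun_range' {a ℓ : ℕ} (ha : 1 ≤ a) : IsRunBlock (List.range' a ℓ) :=
  ⟨a, ha, by rw [List.length_range']⟩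

lemma nonempty_build_ne {π : Finset (List ℕ)} {k : ℕ} {s' : List (ℕ × ℕ)}
    (hstd : IsStdSPart π k) (hrf : RunFree π) (hv : Valid k s') (hne : s' ≠ []) :
    π ≠ buildFrom π s' := by
  rcases eq_nil_or_append s' with rfl | ⟨u, ⟨a, ℓ⟩, rfl⟩
  · exact absurd rfl hne
  · intro h
    have hpos := valid_all_pos _ hv (a, ℓ) (by simp)
    have hmem : List.range' a ℓ ∈ π := by rw [h]; exact lastRun_mem hpos.1
    exact hrf _ hmem (isRun_range' hpos.1)

lemma fsts_concat (u : List (ℕ × ℕ)) (p : ℕ × ℕ) :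
    (u ++ [p]).map Prod.fst = u.map Prod.fst ++ [p.1] := by simp

lemma last_le {π : Finset (List ℕ)} {k : ℕ} (hstd : IsStdSPart π k) (hrf : RunFree π)
    {v v' : List (ℕ × ℕ)} {b m c m' : ℕ} (hb : 1 ≤ b) (hm : 1 ≤ m)
    (hv' : Valid k (v' ++ [(c, m')]))
    (hsort' : ((v' ++ [(c, m')]).map Prod.fst).Pairwise (· < ·))
    (heq : buildFrom π (v ++ [(b, m)]) = buildFrom π (v' ++ [(c, m')])) : b ≤ c := by
  have hmem : List.range' b m ∈ buildFrom π (v' ++ [(c, m')]) := by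
    rw [← heq]; exact lastRun_mem hb
  have hin := runs_build hstd hrf hv' hsort' _ hmem (isRun_range' hb)
  rw [headI_range' hm, fsts_concat] at hin
  rw [fsts_concat, List.pairwise_append] at hsort'
  rcases List.mem_append.mp hin with h | h
  · exact le_of_lt (hsort'.2.2 b h c (List.mem_singleton_self c))
  · rw [List.mem_singleton.mp h]

lemma build_inj : ∀ (r : ℕ) {π : Finset (List ℕ)} {k : ℕ} (s s' : List (ℕ × ℕ)),
    IsStdSPart π k → RunFree π → s.length ≤ r → Valid k s → Valid k s' →
    (s.map Prod.fst).Pairwise (· < ·) → (s'.map Prod.fst).Pairwise (· < ·) →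
    buildFrom π s = buildFrom π s' → s = s' := by
  intro r
  induction r with
  | zero =>
    intro π k s s' hstd hrf hlen hv hv' _ _ hbuild
    have hs : s = [] := List.eq_nil_of_length_eq_zero (by omega)
    subst hs
    rcases eq_nil_or_append s' with rfl | ⟨u, p, rfl⟩
    · rfl
    · exact absurd (by simpa [buildFrom_nil] using hbuild)
        (nonempty_build_ne hstd hrf hv' (by simp))
  | succ r ih =>
    intro π k s s' hstd hrf hlen hv hv' hsort hsort' hbuild
    rcases eq_nil_or_append s with rfl | ⟨u, ⟨a, ℓ⟩, rfl⟩
    · rcases eq_nil_or_append s' with rfl | ⟨u', p', rfl⟩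
      · rfl
      · exact absurd (by simpa [buildFrom_nil] using hbuild)
          (nonempty_build_ne hstd hrf hv' (by simp))
    rcases eq_nil_or_append s' with rfl | ⟨u', ⟨a', ℓ'⟩, rfl⟩
    · exact absurd (by simpa [buildFrom_nil] using hbuild.symm)
        (nonempty_build_ne hstd hrf hv (by simp))
    have hpos := valid_all_pos _ hv (a, ℓ) (by simp)
    have hpos' := valid_all_pos _ hv' (a', ℓ') (by simp)
    have ha1 : 1 ≤ a := hpos.1
    have hl1 : 1 ≤ ℓ := hpos.2
    have ha1' : 1 ≤ a' := hpos'.1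
    have hl1' : 1 ≤ ℓ' := hpos'.2
    have haa : a = a' :=
      le_antisymm (last_le hstd hrf hpos.1 hpos.2 hv' hsort' hbuild)
        (last_le hstd hrf hpos'.1 hpos'.2 hv hsort hbuild.symm)
    subst haa
    have hρstd := std_build hstd hv
    have hm1 : List.range' a ℓ ∈ buildFrom π (u ++ [(a, ℓ)]) := lastRun_mem hpos.1
    have hm2 : List.range' a ℓ' ∈ buildFrom π (u ++ [(a, ℓ)]) := by
      rw [hbuild]; exact lastRun_mem ha1'
    have hbl : List.range' a ℓ = List.range' a ℓ' :=
      std_unique_block (m := a) hρstd hm1 hm2 (by rw [List.mem_range'_1]; omega)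
        (by rw [List.mem_range'_1]; omega)
    have hll : ℓ = ℓ' := by
      have := congrArg List.length hbl
      rwa [List.length_range', List.length_range'] at this
    subst hll
    have hdel : buildFrom π u = buildFrom π u' := by
      have e1 : buildFrom π (u ++ [(a, ℓ)]) = insertRun (buildFrom π u) (a - 1) ℓ := by
        rw [buildFrom_append]; rfl
      have e2 : buildFrom π (u' ++ [(a, ℓ)]) = insertRun (buildFrom π u') (a - 1) ℓ := by
        rw [buildFrom_append]; rfl
      have d1 := deleteRun_insertRun (σ := buildFrom π u) (i := a - 1) (j := ℓ) hpos.2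
      have d2 := deleteRun_insertRun (σ := buildFrom π u') (i := a - 1) (j := ℓ) hpos.2
      rw [← d1, ← d2, ← e1, ← e2, hbuild]
    have hs : u = u' := by
      refine ih u u' hstd hrf ?_ (valid_prefix _ hv) (valid_prefix _ hv') ?_ ?_ hdel
      · simp only [List.length_append, List.length_singleton] at hlen
        omega
      · have := hsort
        rw [fsts_concat, List.pairwise_append] at this
        exact this.1
      · have := hsort'
        rw [fsts_concat, List.pairwise_append] at this
        exact this.1
    rw [hs]

lemma reach_to_build {π ρ : Finset (List ℕ)} {k : ℕ} (hstd : IsStdSPart π k)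
    (h : ReachableFrom π ρ) : ∃ t, Valid k t ∧ ρ = buildFrom π t := by
  induction h with
  | refl => exact ⟨[], trivial, rfl⟩
  | tail hab hbc ihab =>
    obtain ⟨t, hvt, rfl⟩ := ihab
    obtain ⟨i, j, hj, hi, rfl⟩ := hbc
    refine ⟨t ++ [(i + 1, j)], ?_, ?_⟩
    · refine valid_concat t hvt (by omega) ?_ hj
      rw [std_size (std_build hstd hvt)] at hi
      omega
    · rw [buildFrom_append, buildFrom_cons, buildFrom_nil]
      norm_num

lemma main_bij (k n : ℕ) (hn : k < n) (π : Finset (List ℕ))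
    (hstd : IsStdSPart π k) (hrf : RunFree π) :
    Set.BijOn (buildFrom π) {s | Admissible k n s}
      {ρ | ReachableFrom π ρ ∧ sizeS ρ = n} := by
  refine ⟨?_, ?_, ?_⟩
  · intro s hs
    rw [Set.mem_setOf_eq, admissible_iff] at hs
    obtain ⟨hne, hv, hsum, hsort⟩ := hs
    exact ⟨reach_build hstd hv, by rw [std_size (std_build hstd hv), hsum]⟩
  · intro s hs s' hs' heq
    rw [Set.mem_setOf_eq, admissible_iff] at hs hs'
    exact build_inj s.length s s' hstd hrf le_rfl hs.2.1 hs'.2.1 hs.2.2.2 hs'.2.2.2 heq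
  · intro ρ hρ
    obtain ⟨hreach, hsize⟩ := hρ
    obtain ⟨t, hvt, rfl⟩ := reach_to_build hstd hreach
    obtain ⟨s, hvs, hsort, hbuild, hsum, hne⟩ := sort_valid t hvt
    have hsumt : k + (t.map Prod.snd).sum = n := by
      rw [← std_size (std_build hstd hvt)]; exact hsize
    have htne : t ≠ [] := by rintro rfl; simp at hsumt; omega
    refine ⟨s, ?_, (hbuild π).symm⟩
    rw [Set.mem_setOf_eq, admissible_iff]
    exact ⟨hne htne, hvs, by rw [hsum]; exact hsumt, hsort⟩

/-- for a run-free standard s-partition `π` of size `k` and `n > k`,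
successive run insertion gives a bijection from the admissible sequences onto the
s-partitions of size `n` obtainable from `π`; consequently the number of s-partitions
of size `n` that prune to `π` depends only on `k`, not on `π`. -/
theorem runDeletion_char (k n : ℕ) (hn : k < n) (π : Finset (List ℕ))
    (hstd : IsStdSPart π k) (hrf : RunFree π) :
    Set.BijOn (buildFrom π) {s | Admissible k n s}
      {ρ | ReachableFrom π ρ ∧ sizeS ρ = n} ∧
    ∀ π' : Finset (List ℕ), IsStdSPart π' k → RunFree π' →
      Nat.card {ρ : Finset (List ℕ) // ReachableFrom π ρ ∧ sizeS ρ = n} =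
        Nat.card {ρ : Finset (List ℕ) // ReachableFrom π' ρ ∧ sizeS ρ = n} := by
  refine ⟨main_bij k n hn π hstd hrf, ?_⟩
  intro π' hstd' hrf'
  exact Nat.card_congr
    (((Set.BijOn.equiv _ (main_bij k n hn π hstd hrf)).symm).trans
      (Set.BijOn.equiv _ (main_bij k n hn π' hstd' hrf')))
end
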